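/- arXiv:1706.06986 — 5 statements merged into one kernel-verified Lean document; each statement's English description precedes it below -/
import Mathlib

section
/- Let Z_• be a green nonlinear stability function for Λ. Then every Λ-module M admits a unique Harder–Narasimhan filtration: there exist unique t₁ < t₂ < ... < t_m and a unique filtration 0 = M₀ ⊊ M₁ ⊊ ... ⊊ M_m = M such that M_k/M_{k−1} is Z_{t_k}-semistable with μ_{t_k}(M_k/M_{k−1}) = t_k for all k. Moreover t₁ = t₁(M), the minimum over nonzero submodules M' ⊆ M of the smallest t with μ_t(M')=t. -/
open scoped BigOperators

noncomputable section

/-- Dot product of a real vector with a dimension vector. -/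
def dprod {n : ℕ} (x : Fin n → ℝ) (v : Fin n → ℕ) : ℝ := ∑ i, x i * (v i : ℝ)

/-- Slope of a dimension vector with respect to a linear stability function
`Z(x) = a·x + i b·x`. -/
def zslope {n : ℕ} (a b : Fin n → ℝ) (v : Fin n → ℕ) : ℝ := dprod a v / dprod b v

/-- The semistability set `D(M)` of a module `M`, with respect to a dimension-vector
assignment `d`. -/
def DSet {Λ : Type} [Ring Λ] {n : ℕ}
    (d : (N : Type) → [AddCommGroup N] → [Module Λ N] → Fin n → ℕ)
    (M : Type) [AddCommGroup M] [Module Λ M] : Set (Fin n → ℝ) :=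
  {x | dprod x (d M) = 0 ∧ ∀ M' : Submodule Λ M, dprod x (d ↥M') ≤ 0}

/-- A module is Schurian if it is nonzero and every nonzero endomorphism is invertible,
i.e. its endomorphism ring is a division algebra. -/
def Schurian (Λ : Type) [Ring Λ] (M : Type) [AddCommGroup M] [Module Λ M] : Prop :=
  (∃ y : M, y ≠ 0) ∧ ∀ f : M →ₗ[Λ] M, f ≠ 0 → Function.Bijective f

/-- `X` belongs to `E(M)`: `X` admits a finite filtration with all subquotients
isomorphic to `M`. -/
def IsFiltered (Λ : Type) [Ring Λ] (M : Type) [AddCommGroup M] [Module Λ M]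
    (X : Type) [AddCommGroup X] [Module Λ X] : Prop :=
  ∃ (k : ℕ) (F : Fin (k + 1) → Submodule Λ X), Monotone F ∧ F 0 = ⊥ ∧ F (Fin.last k) = ⊤ ∧
    ∀ i : Fin k, Nonempty
      ((↥(F i.succ) ⧸ Submodule.comap (F i.succ).subtype (F i.castSucc)) ≃ₗ[Λ] M)

/-- Slope at time `t` of a dimension vector, for a nonlinear stability function
`Z_t(x) = a_t·x + i b_t·x`. -/
def muZ {n : ℕ} (a b : ℝ → Fin n → ℝ) (t : ℝ) (v : Fin n → ℕ) : ℝ :=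
  dprod (a t) v / dprod (b t) v

/-- `M` is `Z_t`-semistable: every nonzero submodule has zslope at least that of `M`. -/
def Semistable {Λ : Type} [Ring Λ] {n : ℕ}
    (d : (N : Type) → [AddCommGroup N] → [Module Λ N] → Fin n → ℕ)
    (a b : ℝ → Fin n → ℝ) (t : ℝ)
    (M : Type) [AddCommGroup M] [Module Λ M] : Prop :=
  ∀ M' : Submodule Λ M, M' ≠ ⊥ → muZ a b t (d M) ≤ muZ a b t (d ↥M')

/-- The nonlinear stability function given by `(a, b)` is green (for `Λ`): at every
semistable pair `(N, t₀)` (with `N` a nonzero finite-length `Λ`-module, `N`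
`Z_{t₀}`-semistable and `μ_{t₀}(N) = t₀`), the derivative of `t ↦ μ_t(N)` at `t₀`
is `< 1`. -/
def ZGreen {Λ : Type} [Ring Λ] {n : ℕ}
    (d : (N : Type) → [AddCommGroup N] → [Module Λ N] → Fin n → ℕ)
    (a b : ℝ → Fin n → ℝ) : Prop :=
  ∀ (N : Type) [AddCommGroup N] [Module Λ N] [IsNoetherian Λ N] [IsArtinian Λ N] (t₀ : ℝ),
    (∃ y : N, y ≠ 0) → Semistable d a b t₀ N → muZ a b t₀ (d N) = t₀ →
      deriv (fun t => muZ a b t (d N)) t₀ < 1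

/-- `t₀(M)`: the smallest `t` with `μ_t(M) = t` (as an infimum). -/
def tzero {n : ℕ} (a b : ℝ → Fin n → ℝ) (v : Fin n → ℕ) : ℝ := sInf {t | muZ a b t v = t}

/-- `t₁(M)`: the smallest value of `t₀(M')` over nonzero submodules `M' ⊆ M`. -/
def tone {Λ : Type} [Ring Λ] {n : ℕ}
    (d : (N : Type) → [AddCommGroup N] → [Module Λ N] → Fin n → ℕ)
    (a b : ℝ → Fin n → ℝ)
    (M : Type) [AddCommGroup M] [Module Λ M] : ℝ :=
  sInf {s : ℝ | ∃ M' : Submodule Λ M, M' ≠ ⊥ ∧ s = tzero a b (d ↥M')}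

/-- `(F, ts)` is a Harder–Narasimhan filtration of `X` of length `m`: a strict filtration
`0 = F 0 ⊊ F 1 ⊊ ... ⊊ F m = X` together with strictly increasing times `t₁ < ... < t_m`
such that the `k`-th subquotient is `Z_{t_k}`-semistable with slope `μ_{t_k} = t_k`. -/
def IsHNFilt {Λ : Type} [Ring Λ] {n : ℕ}
    (d : (N : Type) → [AddCommGroup N] → [Module Λ N] → Fin n → ℕ)
    (a b : ℝ → Fin n → ℝ)
    (X : Type) [AddCommGroup X] [Module Λ X]
    (m : ℕ) (F : Fin (m + 1) → Submodule Λ X) (ts : Fin m → ℝ) : Prop :=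
  StrictMono F ∧ F 0 = ⊥ ∧ F (Fin.last m) = ⊤ ∧ StrictMono ts ∧
    ∀ i : Fin m,
      Semistable d a b (ts i)
        (↥(F i.succ) ⧸ Submodule.comap (F i.succ).subtype (F i.castSucc)) ∧
      muZ a b (ts i)
        (d (↥(F i.succ) ⧸ Submodule.comap (F i.succ).subtype (F i.castSucc))) = ts i

namespace HNaux

variable {n : ℕ} (a b : ℝ → Fin n → ℝ)

/-- Linearized stability function. -/
def Gf (v : Fin n → ℕ) (t : ℝ) : ℝ := dprod (a t) v - t * dprod (b t) v

variable {a b}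

lemma dprod_add (x : Fin n → ℝ) (v w : Fin n → ℕ) :
    dprod x (v + w) = dprod x v + dprod x w := by
  simp only [dprod, Pi.add_apply, Nat.cast_add, mul_add, Finset.sum_add_distrib]

lemma dprod_zero (x : Fin n → ℝ) : dprod x (0 : Fin n → ℕ) = 0 := by
  simp [dprod]

lemma Gf_add (v w : Fin n → ℕ) (t : ℝ) : Gf a b (v + w) t = Gf a b v t + Gf a b w t := by
  simp only [Gf, dprod_add]; ring

lemma Gf_zero (t : ℝ) : Gf a b (0 : Fin n → ℕ) t = 0 := by simp [Gf, dprod_zero]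

lemma dprod_b_pos (hbpos : ∀ t i, 0 < b t i) {v : Fin n → ℕ} (hv : v ≠ 0) (t : ℝ) :
    0 < dprod (b t) v := by
  obtain ⟨i, hi⟩ : ∃ i, v i ≠ 0 := by
    by_contra h; push_neg at h; exact hv (funext h)
  refine Finset.sum_pos' (fun j _ => ?_) ⟨i, Finset.mem_univ i, ?_⟩
  · exact mul_nonneg (hbpos t j).le (Nat.cast_nonneg _)
  · have : (0:ℝ) < v i := by exact_mod_cast Nat.pos_of_ne_zero hi
    exact mul_pos (hbpos t i) this

lemma muZ_eq_iff (hbpos : ∀ t i, 0 < b t i) {v : Fin n → ℕ} (hv : v ≠ 0) (t : ℝ) :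
    muZ a b t v = t ↔ Gf a b v t = 0 := by
  have hB := dprod_b_pos hbpos hv t
  rw [muZ, Gf, div_eq_iff hB.ne', sub_eq_zero]

lemma le_muZ_iff (hbpos : ∀ t i, 0 < b t i) {v : Fin n → ℕ} (hv : v ≠ 0) (t : ℝ) :
    t ≤ muZ a b t v ↔ 0 ≤ Gf a b v t := by
  have hB := dprod_b_pos hbpos hv t
  rw [muZ, le_div_iff₀ hB, Gf, sub_nonneg]

lemma lt_muZ_iff (hbpos : ∀ t i, 0 < b t i) {v : Fin n → ℕ} (hv : v ≠ 0) (t : ℝ) :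
    t < muZ a b t v ↔ 0 < Gf a b v t := by
  have hB := dprod_b_pos hbpos hv t
  rw [muZ, lt_div_iff₀ hB, Gf, sub_pos]

lemma dprod_continuous (hC1 : ∀ i, ContDiff ℝ 1 (fun t => b t i)) (v : Fin n → ℕ) :
    Continuous (fun t => dprod (b t) v) := by
  unfold dprod
  exact continuous_finset_sum _ (fun i _ => ((hC1 i).continuous).mul continuous_const)

lemma dprod_differentiable (hC1 : ∀ i, ContDiff ℝ 1 (fun t => b t i)) (v : Fin n → ℕ) :
    Differentiable ℝ (fun t => dprod (b t) v) := by
  unfold dprod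
  exact Differentiable.fun_sum (fun i _ => ((hC1 i).differentiable one_ne_zero).mul (differentiable_const _))

variable (hbpos : ∀ t i, 0 < b t i)
variable (hC1a : ∀ i, ContDiff ℝ 1 (fun t => a t i))
variable (hC1b : ∀ i, ContDiff ℝ 1 (fun t => b t i))

include hC1a hC1b in
lemma Gf_continuous (v : Fin n → ℕ) : Continuous (Gf a b v) := by
  unfold Gf
  exact (dprod_continuous hC1a v).sub (continuous_id.mul (dprod_continuous hC1b v))

include hC1a hC1b in
lemma Gf_differentiable (v : Fin n → ℕ) : Differentiable ℝ (Gf a b v) := by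
  unfold Gf
  exact (dprod_differentiable hC1a v).sub (differentiable_id.mul (dprod_differentiable hC1b v))

include hbpos hC1a hC1b in
/-- green derivative transfer -/
lemma deriv_Gf_neg {v : Fin n → ℕ} (hv : v ≠ 0) {t₀ : ℝ} (hfix : Gf a b v t₀ = 0)
    (hlt : deriv (fun t => muZ a b t v) t₀ < 1) : deriv (Gf a b v) t₀ < 0 := by
  set A : ℝ → ℝ := fun t => dprod (a t) v with hA
  set B : ℝ → ℝ := fun t => dprod (b t) v with hB
  have hBpos : 0 < B t₀ := dprod_b_pos hbpos hv t₀
  have hdA : HasDerivAt A (deriv A t₀) t₀ := (dprod_differentiable hC1a v t₀).hasDerivAt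
  have hdB : HasDerivAt B (deriv B t₀) t₀ := (dprod_differentiable hC1b v t₀).hasDerivAt
  have hAt : A t₀ = t₀ * B t₀ := by
    have := hfix; rw [Gf] at this; linarith [this]
  have hmu : HasDerivAt (fun t => muZ a b t v)
      ((deriv A t₀ * B t₀ - A t₀ * deriv B t₀) / (B t₀)^2) t₀ := by
    have := hdA.div hdB hBpos.ne'
    exact this
  have hmu' : deriv (fun t => muZ a b t v) t₀ =
      (deriv A t₀ * B t₀ - A t₀ * deriv B t₀) / (B t₀)^2 := hmu.deriv
  have hGf : HasDerivAt (Gf a b v) (deriv A t₀ - (1 * B t₀ + t₀ * deriv B t₀)) t₀ := by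
    exact hdA.sub ((hasDerivAt_id t₀).mul hdB)
  rw [hGf.deriv]
  rw [hmu', div_lt_one (by positivity)] at hlt
  by_contra h
  push_neg at h
  have h2 : 0 ≤ (deriv A t₀ - (1 * B t₀ + t₀ * deriv B t₀)) * B t₀ := mul_nonneg h hBpos.le
  rw [hAt] at hlt
  nlinarith [hlt, h2]

include hbpos in
/-- To the far left, `Gf v` is positive. -/
lemma Gf_pos_far_left (hconst : ∃ T : ℝ, 0 < T ∧ (∀ t, T ≤ t → a t = a T ∧ b t = b T) ∧
      (∀ t, t ≤ -T → a t = a (-T) ∧ b t = b (-T)))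
    {v : Fin n → ℕ} (hv : v ≠ 0) :
    ∃ s₀ : ℝ, ∀ s ≤ s₀, 0 < Gf a b v s := by
  obtain ⟨T, hT, _, hleft⟩ := hconst
  have hB : 0 < dprod (b (-T)) v := dprod_b_pos hbpos hv (-T)
  refine ⟨min (-T) (dprod (a (-T)) v / dprod (b (-T)) v - 1), fun s hs => ?_⟩
  have hs1 : s ≤ -T := le_trans hs (min_le_left _ _)
  have hs2 : s < dprod (a (-T)) v / dprod (b (-T)) v :=
    lt_of_le_of_lt (le_trans hs (min_le_right _ _)) (by linarith)
  obtain ⟨ha, hb⟩ := hleft s hs1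
  rw [Gf, ha, hb, sub_pos]
  rw [lt_div_iff₀ hB] at hs2
  linarith

include hbpos in
lemma Gf_neg_far_right (hconst : ∃ T : ℝ, 0 < T ∧ (∀ t, T ≤ t → a t = a T ∧ b t = b T) ∧
      (∀ t, t ≤ -T → a t = a (-T) ∧ b t = b (-T)))
    {v : Fin n → ℕ} (hv : v ≠ 0) :
    ∃ s₁ : ℝ, ∀ s, s₁ ≤ s → Gf a b v s < 0 := by
  obtain ⟨T, hT, hright, _⟩ := hconst
  have hB : 0 < dprod (b T) v := dprod_b_pos hbpos hv T
  refine ⟨max T (dprod (a T) v / dprod (b T) v + 1), fun s hs => ?_⟩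
  have hs1 : T ≤ s := le_trans (le_max_left _ _) hs
  have hs2 : dprod (a T) v / dprod (b T) v < s :=
    lt_of_lt_of_le (by linarith) (le_trans (le_max_right _ _) hs)
  obtain ⟨ha, hb⟩ := hright s hs1
  rw [Gf, ha, hb, sub_neg]
  rw [div_lt_iff₀ hB] at hs2
  linarith

include hbpos hC1a hC1b in
lemma Gf_exists_zero (hconst : ∃ T : ℝ, 0 < T ∧ (∀ t, T ≤ t → a t = a T ∧ b t = b T) ∧
      (∀ t, t ≤ -T → a t = a (-T) ∧ b t = b (-T))) {v : Fin n → ℕ} (hv : v ≠ 0) :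
    {t | Gf a b v t = 0}.Nonempty := by
  obtain ⟨s₀, hs₀⟩ := Gf_pos_far_left hbpos hconst hv
  obtain ⟨s₁, hs₁⟩ := Gf_neg_far_right hbpos hconst hv
  set u := min s₀ s₁ with hu
  set w := max s₁ u with hw
  have huw : u ≤ w := le_max_right _ _
  have hgu : 0 < Gf a b v u := hs₀ u (min_le_left _ _)
  have hgw : Gf a b v w < 0 := hs₁ w (le_max_left _ _)
  have hsub := intermediate_value_Icc' huw ((Gf_continuous hC1a hC1b v).continuousOn)
  have h0 : (0:ℝ) ∈ Set.Icc (Gf a b v w) (Gf a b v u) := ⟨hgw.le, hgu.le⟩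
  obtain ⟨z, _, hz⟩ := hsub h0
  exact ⟨z, hz⟩

section TZ

variable (hconst : ∃ T : ℝ, 0 < T ∧ (∀ t, T ≤ t → a t = a T ∧ b t = b T) ∧
      (∀ t, t ≤ -T → a t = a (-T) ∧ b t = b (-T)))

include hbpos hC1a hC1b hconst

lemma tz_set_eq {v : Fin n → ℕ} (hv : v ≠ 0) :
    {t | muZ a b t v = t} = {t | Gf a b v t = 0} :=
  Set.ext fun t => muZ_eq_iff hbpos hv t

omit hC1a hC1b in
lemma tz_bddBelow {v : Fin n → ℕ} (hv : v ≠ 0) : BddBelow {t | Gf a b v t = 0} := by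
  obtain ⟨s₀, hs₀⟩ := Gf_pos_far_left hbpos hconst hv
  exact ⟨s₀, fun t ht => by
    by_contra h; push_neg at h
    exact absurd ht (by simpa using (hs₀ t h.le).ne')⟩

lemma tz_isClosed (v : Fin n → ℕ) : IsClosed {t | Gf a b v t = 0} :=
  isClosed_eq (Gf_continuous hC1a hC1b v) continuous_const

/-- `Gf v` vanishes at `tzero`. -/
lemma Gf_tz_eq_zero {v : Fin n → ℕ} (hv : v ≠ 0) : Gf a b v (tzero a b v) = 0 := by
  have : tzero a b v = sInf {t | Gf a b v t = 0} := by
    rw [tzero, tz_set_eq hbpos hC1a hC1b hconst hv]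
  rw [this]
  exact (tz_isClosed hbpos hC1a hC1b hconst v).csInf_mem
    (Gf_exists_zero hbpos hC1a hC1b hconst hv) (tz_bddBelow hbpos hconst hv)

lemma tz_le_of_zero {v : Fin n → ℕ} (hv : v ≠ 0) {t : ℝ} (ht : Gf a b v t = 0) :
    tzero a b v ≤ t := by
  rw [tzero, tz_set_eq hbpos hC1a hC1b hconst hv]
  exact csInf_le (tz_bddBelow hbpos hconst hv) ht

lemma Gf_pos_of_lt_tz {v : Fin n → ℕ} (hv : v ≠ 0) {t : ℝ} (ht : t < tzero a b v) :
    0 < Gf a b v t := by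
  rcases lt_trichotomy (Gf a b v t) 0 with h | h | h
  · exfalso
    obtain ⟨s₀, hs₀⟩ := Gf_pos_far_left hbpos hconst hv
    have huw : min s₀ t ≤ t := min_le_right _ _
    have hsub := intermediate_value_Icc' huw ((Gf_continuous hC1a hC1b v).continuousOn)
    have h0 : (0:ℝ) ∈ Set.Icc (Gf a b v t) (Gf a b v (min s₀ t)) :=
      ⟨h.le, (hs₀ _ (min_le_left _ _)).le⟩
    obtain ⟨z, hz1, hz2⟩ := hsub h0
    exact absurd (lt_of_le_of_lt hz1.2 ht)
      (not_lt.2 (tz_le_of_zero hbpos hC1a hC1b hconst hv hz2))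
  · exact absurd (tz_le_of_zero hbpos hC1a hC1b hconst hv h) (not_le.2 ht)
  · exact h

lemma le_tz_of_pos_below {v : Fin n → ℕ} (hv : v ≠ 0) {t : ℝ}
    (h : ∀ τ, τ < t → 0 < Gf a b v τ) : t ≤ tzero a b v := by
  by_contra hlt
  push_neg at hlt
  exact absurd (Gf_tz_eq_zero hbpos hC1a hC1b hconst hv)
    (by simpa using (h _ hlt).ne')

end TZ

include hC1a hC1b in
lemma Gf_eventually_neg_right {v : Fin n → ℕ} {s : ℝ} (h0 : Gf a b v s = 0)
    (hd : deriv (Gf a b v) s < 0) : ∀ᶠ τ in nhdsWithin s (Set.Ioi s), Gf a b v τ < 0 := by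
  have hder : HasDerivAt (Gf a b v) (deriv (Gf a b v) s) s :=
    (Gf_differentiable hC1a hC1b v s).hasDerivAt
  have hslope := hasDerivAt_iff_tendsto_slope.1 hder
  have hev : ∀ᶠ τ in nhdsWithin s {s}ᶜ, slope (Gf a b v) s τ < 0 :=
    Filter.Tendsto.eventually_lt_const hd hslope
  have hle : nhdsWithin s (Set.Ioi s) ≤ nhdsWithin s {s}ᶜ :=
    nhdsWithin_mono s (fun x hx => ne_of_gt hx)
  filter_upwards [hle hev, self_mem_nhdsWithin] with τ hτ hτs
  rw [slope_def_field] at hτ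
  have h1 : 0 < τ - s := sub_pos.2 hτs
  have := mul_neg_of_neg_of_pos hτ h1
  rw [div_mul_cancel₀] at this
  · simpa [h0] using this
  · exact h1.ne'

include hC1a hC1b in
lemma Gf_eventually_pos_left {v : Fin n → ℕ} {s : ℝ} (h0 : Gf a b v s = 0)
    (hd : deriv (Gf a b v) s < 0) : ∀ᶠ τ in nhdsWithin s (Set.Iio s), 0 < Gf a b v τ := by
  have hder : HasDerivAt (Gf a b v) (deriv (Gf a b v) s) s :=
    (Gf_differentiable hC1a hC1b v s).hasDerivAt
  have hslope := hasDerivAt_iff_tendsto_slope.1 hder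
  have hev : ∀ᶠ τ in nhdsWithin s {s}ᶜ, slope (Gf a b v) s τ < 0 :=
    Filter.Tendsto.eventually_lt_const hd hslope
  have hle : nhdsWithin s (Set.Iio s) ≤ nhdsWithin s {s}ᶜ :=
    nhdsWithin_mono s (fun x hx => ne_of_lt hx)
  filter_upwards [hle hev, self_mem_nhdsWithin] with τ hτ hτs
  rw [slope_def_field] at hτ
  have h1 : τ - s < 0 := sub_neg.2 hτs
  have := mul_pos_of_neg_of_neg hτ h1
  rw [div_mul_cancel₀] at this
  · simpa [h0] using this
  · exact h1.ne

include hC1a hC1b in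
lemma Gf_nonneg_left_lim {v : Fin n → ℕ} {s : ℝ}
    (h : ∀ τ, τ < s → 0 < Gf a b v τ) : 0 ≤ Gf a b v s := by
  have hcont : Filter.Tendsto (Gf a b v) (nhdsWithin s (Set.Iio s)) (nhds (Gf a b v s)) :=
    ((Gf_continuous hC1a hC1b v).continuousAt).continuousWithinAt
  exact ge_of_tendsto hcont (by
    filter_upwards [self_mem_nhdsWithin] with τ hτ
    exact (h τ hτ).le)

include hC1a hC1b in
lemma Gf_nonneg_right_lim {v : Fin n → ℕ} {s w : ℝ} (hsw : s < w)
    (h : ∀ τ, τ ∈ Set.Ioc s w → 0 < Gf a b v τ) : 0 ≤ Gf a b v s := by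
  have hcont : Filter.Tendsto (Gf a b v) (nhdsWithin s (Set.Ioi s)) (nhds (Gf a b v s)) :=
    ((Gf_continuous hC1a hC1b v).continuousAt).continuousWithinAt
  have hmem : Set.Ioc s w ∈ nhdsWithin s (Set.Ioi s) := Ioc_mem_nhdsGT hsw
  exact ge_of_tendsto hcont (by
    filter_upwards [hmem] with τ hτ
    exact (h τ hτ).le)


section Modules

open Submodule

variable {Λ : Type} [Ring Λ]
variable (d : (N : Type) → [AddCommGroup N] → [Module Λ N] → Fin n → ℕ)

variable (a b)

def PosP (X : Type) [AddCommGroup X] [Module Λ X] (τ : ℝ) : Prop :=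
  ∀ A : Submodule Λ X, A ≠ ⊥ → 0 < Gf a b (d ↥A) τ

variable {a b}

variable (hiso : ∀ (N N' : Type) [AddCommGroup N] [Module Λ N] [AddCommGroup N'] [Module Λ N']
      [IsNoetherian Λ N] [IsArtinian Λ N], (N ≃ₗ[Λ] N') → d N = d N')
variable (hadd : ∀ (N : Type) [AddCommGroup N] [Module Λ N] [IsNoetherian Λ N] [IsArtinian Λ N]
      (A : Submodule Λ N), d ↥A + d (N ⧸ A) = d N)
variable (hzero : ∀ (N : Type) [AddCommGroup N] [Module Λ N] [IsNoetherian Λ N] [IsArtinian Λ N],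
      (d N = 0 ↔ ∀ y : N, y = 0))

section Basic

variable {X : Type} [AddCommGroup X] [Module Λ X] [IsNoetherian Λ X] [IsArtinian Λ X]

include hzero in
lemma d_ne_zero {A : Submodule Λ X} (hA : A ≠ ⊥) : d ↥A ≠ 0 := by
  intro h
  rw [hzero ↥A] at h
  refine hA ((Submodule.eq_bot_iff A).2 fun x hx => ?_)
  have := h ⟨x, hx⟩
  simpa using congrArg Subtype.val this

include hzero in
lemma d_ne_zero_self (hX : ∃ y : X, y ≠ 0) : d X ≠ 0 := by
  intro h
  rw [hzero X] at h
  obtain ⟨y, hy⟩ := hX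
  exact hy (h y)

include hadd in
lemma Gf_submodule_add (A : Submodule Λ X) (t : ℝ) :
    Gf a b (d X) t = Gf a b (d ↥A) t + Gf a b (d (X ⧸ A)) t := by
  rw [← hadd X A, Gf_add]

include hadd in
lemma d_le_self (A : Submodule Λ X) : ∀ i, d ↥A i ≤ d X i := fun i => by
  have := congrFun (hadd X A) i
  simpa [← this] using Nat.le_add_right _ _

include hadd in
lemma subvec_finite : {v : Fin n → ℕ | ∃ A : Submodule Λ X, v = d ↥A}.Finite := by
  refine (Set.finite_Icc (0 : Fin n → ℕ) (d X)).subset ?_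
  rintro v ⟨A, rfl⟩
  exact ⟨fun i => Nat.zero_le _, fun i => d_le_self d hadd A i⟩

/-- The subquotient `B/A` is isomorphic to the corresponding subquotient of `X ⧸ P`. -/
lemma subquot_equiv (P A B : Submodule Λ X) (hPA : P ≤ A) (hAB : A ≤ B) :
    Nonempty ((↥B ⧸ comap B.subtype A) ≃ₗ[Λ]
      (↥(map P.mkQ B) ⧸ comap (map P.mkQ B).subtype (map P.mkQ A))) := by
  set θ : ↥B →ₗ[Λ] ↥(map P.mkQ B) :=
    LinearMap.codRestrict _ (P.mkQ ∘ₗ B.subtype)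
      (fun x => Submodule.mem_map_of_mem x.2) with hθ
  have hθsurj : Function.Surjective θ := by
    rintro ⟨y, hy⟩
    obtain ⟨x, hx, rfl⟩ := hy
    exact ⟨⟨x, hx⟩, rfl⟩
  set ψ : ↥B →ₗ[Λ] (↥(map P.mkQ B) ⧸ comap (map P.mkQ B).subtype (map P.mkQ A)) :=
    (comap (map P.mkQ B).subtype (map P.mkQ A)).mkQ ∘ₗ θ with hψ
  have hψsurj : Function.Surjective ψ :=
    (Submodule.mkQ_surjective _).comp hθsurj
  have hker : LinearMap.ker ψ = comap B.subtype A := by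
    ext x
    have h1 : ψ x = Submodule.Quotient.mk (θ x) := rfl
    simp only [LinearMap.mem_ker, h1, Submodule.Quotient.mk_eq_zero, Submodule.mem_comap]
    show P.mkQ x.1 ∈ map P.mkQ A ↔ (x : X) ∈ A
    constructor
    · rintro ⟨a', ha', he⟩
      have hp : a' - x.1 ∈ P := (Submodule.Quotient.eq P).1 he
      have hx : (x : X) = a' - (a' - x.1) := (sub_sub_cancel _ _).symm
      rw [hx]
      exact Submodule.sub_mem _ ha' (hPA hp)
    · intro hx
      exact ⟨x.1, hx, rfl⟩
  exact ⟨(Submodule.quotEquivOfEq _ _ hker.symm).trans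
    (LinearMap.quotKerEquivOfSurjective ψ hψsurj)⟩

/-- The subquotient `B/A` is isomorphic to the image of `B` in `X ⧸ A`. -/
lemma quot_equiv_map_mkQ {A B : Submodule Λ X} (hAB : A ≤ B) :
    Nonempty ((↥B ⧸ comap B.subtype A) ≃ₗ[Λ] ↥(map A.mkQ B)) := by
  set ψ : ↥B →ₗ[Λ] ↥(map A.mkQ B) :=
    LinearMap.codRestrict _ (A.mkQ ∘ₗ B.subtype)
      (fun x => Submodule.mem_map_of_mem x.2) with hψ
  have hψsurj : Function.Surjective ψ := by
    rintro ⟨y, hy⟩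
    obtain ⟨x, hx, rfl⟩ := hy
    exact ⟨⟨x, hx⟩, rfl⟩
  have hker : LinearMap.ker ψ = comap B.subtype A := by
    ext x
    simp only [hψ, LinearMap.mem_ker, Submodule.mem_comap]
    constructor
    · intro hx
      have : A.mkQ x.1 = 0 := congrArg Subtype.val hx
      simpa [Submodule.Quotient.mk_eq_zero] using this
    · intro hx
      apply Subtype.ext
      simpa [Submodule.Quotient.mk_eq_zero] using hx
  exact ⟨(Submodule.quotEquivOfEq _ _ hker.symm).trans
    (LinearMap.quotKerEquivOfSurjective ψ hψsurj)⟩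

include hiso hadd in
/-- Split `d Y` as the part in `A` plus the image `Z` in the subquotient `B/A`. -/
lemma split (A B Y : Submodule Λ X) (hYB : Y ≤ B) :
    ∃ Z : Submodule Λ (↥B ⧸ comap B.subtype A),
      (Z = ⊥ ↔ Y ≤ A) ∧ (A ⊔ Y = B → Z = ⊤) ∧
      d ↥Y = d ↥(Y ⊓ A) + d ↥Z := by
  set ψ : ↥Y →ₗ[Λ] (↥B ⧸ comap B.subtype A) :=
    (comap B.subtype A).mkQ ∘ₗ Submodule.inclusion hYB with hψ
  refine ⟨LinearMap.range ψ, ?_, ?_, ?_⟩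
  · rw [LinearMap.range_eq_bot]
    constructor
    · intro h y hy
      have := congrFun (congrArg DFunLike.coe h) ⟨y, hy⟩
      simpa [hψ, Submodule.Quotient.mk_eq_zero] using this
    · intro h
      ext x
      simpa [hψ, Submodule.Quotient.mk_eq_zero] using h x.2
  · intro hsup
    rw [LinearMap.range_eq_top]
    intro q
    obtain ⟨x, rfl⟩ := Submodule.mkQ_surjective _ q
    have hx : (x : X) ∈ A ⊔ Y := hsup.symm ▸ x.2
    obtain ⟨v, hv, w, hw, hvw⟩ := Submodule.mem_sup.1 hx
    refine ⟨⟨w, hw⟩, ?_⟩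
    simp only [hψ, LinearMap.comp_apply, Submodule.mkQ_apply]
    rw [Submodule.Quotient.eq]
    have : (Submodule.inclusion hYB ⟨w, hw⟩ : ↥B) = ⟨w, hYB hw⟩ := rfl
    rw [this]
    show (⟨w, hYB hw⟩ : ↥B) - x ∈ comap B.subtype A
    have : ((⟨w, hYB hw⟩ : ↥B) - x : ↥B) = ⟨w - x, _⟩ := rfl
    simp only [Submodule.mem_comap]
    show w - (x : X) ∈ A
    have : w - (x : X) = -v := by rw [← hvw]; abel
    rw [this]
    exact Submodule.neg_mem _ hv
  · have h1 := hadd ↥Y (LinearMap.ker ψ)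
    have hker : LinearMap.ker ψ = comap Y.subtype (Y ⊓ A) := by
      ext x
      simp only [hψ, LinearMap.mem_ker, LinearMap.comp_apply, Submodule.mkQ_apply,
        Submodule.Quotient.mk_eq_zero, Submodule.mem_comap]
      constructor
      · intro hx
        exact ⟨x.2, hx⟩
      · intro hx
        exact hx.2
    have e1 : ↥(LinearMap.ker ψ) ≃ₗ[Λ] ↥(Y ⊓ A) := by
      rw [hker]
      exact Submodule.comapSubtypeEquivOfLe inf_le_left
    have e2 : (↥Y ⧸ LinearMap.ker ψ) ≃ₗ[Λ] ↥(LinearMap.range ψ) :=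
      LinearMap.quotKerEquivRange ψ
    rw [← h1, hiso _ _ e1, hiso _ _ e2]


include hzero in
lemma d_bot : d ↥(⊥ : Submodule Λ X) = 0 := by
  rw [hzero]
  intro y
  exact Subtype.ext ((Submodule.mem_bot Λ).1 y.2)

include hzero in
lemma nontrivial_of_ne_bot {A : Submodule Λ X} (hA : A ≠ ⊥) : ∃ y : ↥A, y ≠ 0 := by
  obtain ⟨x, hx, h0⟩ := (Submodule.ne_bot_iff A).1 hA
  exact ⟨⟨x, hx⟩, fun h => h0 (congrArg Subtype.val h)⟩

include hbpos hiso hzero in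
lemma semistable_builder {A : Submodule Λ X} (hA : A ≠ ⊥) {t : ℝ}
    (hfix : Gf a b (d ↥A) t = 0) (hnn : ∀ B : Submodule Λ X, B ≤ A → 0 ≤ Gf a b (d ↥B) t) :
    Semistable d a b t ↥A ∧ muZ a b t (d ↥A) = t := by
  have hdA := d_ne_zero (d := d) (hzero := hzero) hA
  have hmu := (muZ_eq_iff hbpos hdA t).2 hfix
  refine ⟨?_, hmu⟩
  intro Z hZ
  set B := map A.subtype Z with hB
  have hBA : B ≤ A := map_subtype_le A Z
  have hBne : B ≠ ⊥ := by
    obtain ⟨z, hz, hz0⟩ := (Submodule.ne_bot_iff Z).1 hZ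
    exact (Submodule.ne_bot_iff B).2
      ⟨z.1, ⟨z, hz, rfl⟩, fun h => hz0 (Subtype.ext h)⟩
  have hdZB : d ↥Z = d ↥B := hiso _ _ (Submodule.equivSubtypeMap A Z)
  rw [hmu, hdZB]
  exact (le_muZ_iff hbpos (d_ne_zero (d := d) (hzero := hzero) hBne) t).2 (hnn B hBA)

include hbpos hC1a hC1b hiso hzero in
lemma deriv_neg_of_fix (hgreen : ZGreen d a b) {A : Submodule Λ X} (hA : A ≠ ⊥) {t : ℝ}
    (hfix : Gf a b (d ↥A) t = 0) (hnn : ∀ B : Submodule Λ X, B ≤ A → 0 ≤ Gf a b (d ↥B) t) :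
    deriv (Gf a b (d ↥A)) t < 0 := by
  obtain ⟨hss, hmu⟩ := semistable_builder (d := d) (hiso := hiso) (hzero := hzero) (hbpos := hbpos) hA hfix hnn
  have hne := nontrivial_of_ne_bot (d := d) (hzero := hzero) hA
  exact deriv_Gf_neg hbpos hC1a hC1b (d_ne_zero (d := d) (hzero := hzero) hA) hfix (hgreen ↥A t hne hss hmu)

include hbpos hC1a hC1b hiso hadd hzero in
/-- THE key green lemma: strict positivity propagates leftward. -/
lemma key (hgreen : ZGreen d a b) {tstar τ : ℝ} (hPos : PosP (Λ := Λ) (d := d) (a := a) (b := b) X tstar)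
    (hτ : τ ≤ tstar) : PosP (Λ := Λ) (d := d) (a := a) (b := b) X τ := by
  by_contra hcon
  simp only [PosP, not_forall, not_lt, exists_prop] at hcon
  obtain ⟨A₀, hA₀, hA₀le⟩ := hcon
  have hτlt : τ < tstar := by
    rcases eq_or_lt_of_le hτ with rfl | h
    · exact absurd (hPos A₀ hA₀) (not_lt.2 hA₀le)
    · exact h
  set V : Set (Fin n → ℕ) := {v | (∃ A : Submodule Λ X, v = d ↥A) ∧ v ≠ 0} with hV
  have hVfin : V.Finite := (subvec_finite (d := d) (hadd := hadd) (X := X)).subset (fun v hv => hv.1)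
  set S : Set ℝ := ⋃ v ∈ V, (Set.Icc τ tstar ∩ {s | Gf a b v s ≤ 0}) with hS
  have hSclosed : IsClosed S := hVfin.isClosed_biUnion (fun v _ =>
    isClosed_Icc.inter (isClosed_le (Gf_continuous hC1a hC1b v) continuous_const))
  have hSmem : ∀ {s : ℝ}, s ∈ S ↔ ∃ A : Submodule Λ X, A ≠ ⊥ ∧
      s ∈ Set.Icc τ tstar ∧ Gf a b (d ↥A) s ≤ 0 := by
    intro s
    simp only [hS, Set.mem_iUnion, Set.mem_inter_iff, Set.mem_setOf_eq]
    constructor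
    · rintro ⟨v, ⟨⟨A, rfl⟩, hvne⟩, h1, h2⟩
      refine ⟨A, fun hbot => hvne ?_, h1, h2⟩
      rw [hbot]; exact d_bot (d := d) (hzero := hzero)
    · rintro ⟨A, hA, h1, h2⟩
      exact ⟨d ↥A, ⟨⟨A, rfl⟩, d_ne_zero (d := d) (hzero := hzero) hA⟩, h1, h2⟩
  have hSne : τ ∈ S := hSmem.2 ⟨A₀, hA₀, Set.left_mem_Icc.2 hτ, hA₀le⟩
  have hSbdd : BddAbove S := ⟨tstar, fun s hs => (hSmem.1 hs).choose_spec.2.1.2⟩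
  set sm := sSup S with hsm
  have hmem := hSclosed.csSup_mem ⟨τ, hSne⟩ hSbdd
  obtain ⟨A, hA, hIcc, hAle⟩ := hSmem.1 hmem
  have hsmle : sm ≤ tstar := hIcc.2
  have hsmlt : sm < tstar := by
    rcases eq_or_lt_of_le hsmle with heq | h
    · exact absurd (hPos A hA) (not_lt.2 (heq ▸ hAle))
    · exact h
  have hup : ∀ σ ∈ Set.Ioc sm tstar, ∀ B : Submodule Λ X, B ≠ ⊥ → 0 < Gf a b (d ↥B) σ := by
    intro σ hσ B hB
    by_contra hle
    push_neg at hle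
    have hτsm : τ ≤ sm := le_csSup hSbdd hSne
    have : σ ∈ S := hSmem.2 ⟨B, hB, ⟨le_trans hτsm hσ.1.le, hσ.2⟩, hle⟩
    exact absurd (le_csSup hSbdd this) (not_le.2 hσ.1)
  have hA0 : Gf a b (d ↥A) sm = 0 :=
    le_antisymm hAle (Gf_nonneg_right_lim hC1a hC1b hsmlt (fun σ hσ => hup σ hσ A hA))
  have hnn : ∀ B : Submodule Λ X, B ≤ A → 0 ≤ Gf a b (d ↥B) sm := by
    intro B _
    by_cases hB : B = ⊥
    · rw [hB, d_bot (d := d) (hzero := hzero), Gf_zero]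
    · exact Gf_nonneg_right_lim hC1a hC1b hsmlt (fun σ hσ => hup σ hσ B hB)
  have hderiv := deriv_neg_of_fix (d := d) (hiso := hiso) (hzero := hzero) (hbpos := hbpos) (hC1a := hC1a) (hC1b := hC1b) hgreen hA hA0 hnn
  have hev := Gf_eventually_neg_right hC1a hC1b hA0 hderiv
  have hmem2 : Set.Ioc sm tstar ∈ nhdsWithin sm (Set.Ioi sm) := Ioc_mem_nhdsGT hsmlt
  obtain ⟨σ, hσ1, hσ2⟩ := (hev.and (Filter.eventually_of_mem hmem2 (fun x hx => hx))).exists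
  exact absurd (hup σ hσ2 A hA) (not_lt.2 hσ1.le)

include hbpos hC1a hC1b hiso hadd hzero in
/-- Lemma C: a semistable fixed point dominates all zeros of all submodules. -/
lemma lemC (hgreen : ZGreen d a b) {t₀ : ℝ}
    (hnn : ∀ B : Submodule Λ X, 0 ≤ Gf a b (d ↥B) t₀) :
    ∀ τ, τ < t₀ → PosP (Λ := Λ) (d := d) (a := a) (b := b) X τ := by
  have hVfin : {v : Fin n → ℕ | ∃ A : Submodule Λ X, A ≠ ⊥ ∧ v = d ↥A}.Finite :=
    (subvec_finite (d := d) (hadd := hadd) (X := X)).subset (by rintro v ⟨A, _, rfl⟩; exact ⟨A, rfl⟩)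
  have hev : ∀ v ∈ {v : Fin n → ℕ | ∃ A : Submodule Λ X, A ≠ ⊥ ∧ v = d ↥A},
      ∀ᶠ τ in nhdsWithin t₀ (Set.Iio t₀), 0 < Gf a b v τ := by
    rintro v ⟨A, hA, rfl⟩
    rcases (hnn A).lt_or_eq with hpos | heq
    · have hc : Filter.Tendsto (Gf a b (d ↥A)) (nhds t₀) (nhds (Gf a b (d ↥A) t₀)) :=
        (Gf_continuous hC1a hC1b _).continuousAt
      exact (hc.eventually_const_lt hpos).filter_mono nhdsWithin_le_nhds
    · exact Gf_eventually_pos_left hC1a hC1b heq.symm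
        (deriv_neg_of_fix (d := d) (hiso := hiso) (hzero := hzero) (hbpos := hbpos) (hC1a := hC1a) (hC1b := hC1b) hgreen hA heq.symm (fun B _ => hnn B))
  have hall := (hVfin.eventually_all (l := nhdsWithin t₀ (Set.Iio t₀))).2 hev
  intro τ hτ
  have hmem : Set.Ioo τ t₀ ∈ nhdsWithin t₀ (Set.Iio t₀) :=
    Ioo_mem_nhdsLT_of_mem ⟨hτ, le_rfl⟩
  obtain ⟨ts, h1, h2⟩ := (hall.and (Filter.eventually_of_mem hmem (fun x hx => hx))).exists
  have hPos : PosP (Λ := Λ) (d := d) (a := a) (b := b) X ts := fun A hA => h1 (d ↥A) ⟨A, hA, rfl⟩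
  exact key (d := d) (hiso := hiso) (hadd := hadd) (hzero := hzero) (hbpos := hbpos) (hC1a := hC1a) (hC1b := hC1b) hgreen hPos h2.1.le


include hbpos hC1a hC1b hadd hzero in
lemma tone_spec (hconst : ∃ T : ℝ, 0 < T ∧ (∀ t, T ≤ t → a t = a T ∧ b t = b T) ∧
      (∀ t, t ≤ -T → a t = a (-T) ∧ b t = b (-T)))
    (hX : (⊤ : Submodule Λ X) ≠ ⊥) :
    (∃ A₁ : Submodule Λ X, A₁ ≠ ⊥ ∧ Gf a b (d ↥A₁) (tone d a b X) = 0) ∧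
    (∀ τ, τ < tone d a b X → PosP (Λ := Λ) (d := d) (a := a) (b := b) X τ) ∧
    (∀ A : Submodule Λ X, 0 ≤ Gf a b (d ↥A) (tone d a b X)) := by
  have hTfin : {s : ℝ | ∃ A : Submodule Λ X, A ≠ ⊥ ∧ s = tzero a b (d ↥A)}.Finite := by
    refine ((subvec_finite (d := d) (hadd := hadd) (X := X)).image (fun v => tzero a b v)).subset ?_
    rintro s ⟨A, hA, rfl⟩
    exact ⟨d ↥A, ⟨A, rfl⟩, rfl⟩
  have hTne : {s : ℝ | ∃ A : Submodule Λ X, A ≠ ⊥ ∧ s = tzero a b (d ↥A)}.Nonempty :=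
    ⟨tzero a b (d ↥(⊤ : Submodule Λ X)), ⊤, hX, rfl⟩
  have htone : tone d a b X ∈ {s : ℝ | ∃ A : Submodule Λ X, A ≠ ⊥ ∧ s = tzero a b (d ↥A)} :=
    hTne.csInf_mem hTfin
  have hlb : ∀ A : Submodule Λ X, A ≠ ⊥ → tone d a b X ≤ tzero a b (d ↥A) :=
    fun A hA => csInf_le hTfin.bddBelow ⟨A, hA, rfl⟩
  have hpos : ∀ τ, τ < tone d a b X → PosP (Λ := Λ) (d := d) (a := a) (b := b) X τ := by
    intro τ hτ A hA
    exact Gf_pos_of_lt_tz hbpos hC1a hC1b hconst (d_ne_zero (d := d) (hzero := hzero) hA)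
      (lt_of_lt_of_le hτ (hlb A hA))
  refine ⟨?_, hpos, ?_⟩
  · obtain ⟨A₁, hA₁, hteq⟩ := htone
    refine ⟨A₁, hA₁, ?_⟩
    rw [hteq]
    exact Gf_tz_eq_zero hbpos hC1a hC1b hconst (d_ne_zero (d := d) (hzero := hzero) hA₁)
  · intro A
    by_cases hA : A = ⊥
    · rw [hA, d_bot (d := d) (hzero := hzero), Gf_zero]
    · exact Gf_nonneg_left_lim hC1a hC1b (fun τ hτ => hpos τ hτ A hA)

include hiso hadd hzero in
lemma ach_sup {t₁ : ℝ} {A B : Submodule Λ X} (hA : A ≠ ⊥) (hGA : Gf a b (d ↥A) t₁ = 0)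
    (hGB : Gf a b (d ↥B) t₁ = 0)
    (hnn : ∀ C : Submodule Λ X, 0 ≤ Gf a b (d ↥C) t₁) :
    Gf a b (d ↥(A ⊔ B)) t₁ = 0 := by
  obtain ⟨Z, hZbot, hZtop, hdB⟩ :=
    split (d := d) (hiso := hiso) (hadd := hadd) A (A ⊔ B) B le_sup_right
  have h1 := hadd ↥(A ⊔ B) (comap (A ⊔ B).subtype A)
  have hdcom : d ↥(comap (A ⊔ B).subtype A) = d ↥A :=
    hiso _ _ (Submodule.comapSubtypeEquivOfLe le_sup_left)
  have hZT : Z = ⊤ := hZtop rfl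
  have hdQ : d ↥Z = d (↥(A ⊔ B) ⧸ comap (A ⊔ B).subtype A) := by
    rw [hZT]
    exact hiso _ _ Submodule.topEquiv
  have e1 : Gf a b (d ↥(A ⊔ B)) t₁ =
      Gf a b (d ↥A) t₁ + Gf a b (d (↥(A ⊔ B) ⧸ comap (A ⊔ B).subtype A)) t₁ := by
    rw [← h1, Gf_add, hdcom]
  have e2 : Gf a b (d ↥B) t₁ = Gf a b (d ↥(B ⊓ A)) t₁ +
      Gf a b (d (↥(A ⊔ B) ⧸ comap (A ⊔ B).subtype A)) t₁ := by
    rw [hdB, Gf_add, hdQ]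
  have := hnn (A ⊔ B)
  have := hnn (B ⊓ A)
  linarith

include hiso hadd hzero in
lemma max_achiever {t₁ : ℝ} (hne : ∃ A : Submodule Λ X, A ≠ ⊥ ∧ Gf a b (d ↥A) t₁ = 0)
    (hnn : ∀ C : Submodule Λ X, 0 ≤ Gf a b (d ↥C) t₁) :
    ∃ M₁ : Submodule Λ X, (M₁ ≠ ⊥ ∧ Gf a b (d ↥M₁) t₁ = 0) ∧
      ∀ A : Submodule Λ X, A ≠ ⊥ → Gf a b (d ↥A) t₁ = 0 → A ≤ M₁ := by
  obtain ⟨A₀, hA₀⟩ := hne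
  obtain ⟨M₁, hM₁, hmax⟩ := (set_has_maximal_iff_noetherian.2 inferInstance)
    {A : Submodule Λ X | A ≠ ⊥ ∧ Gf a b (d ↥A) t₁ = 0} ⟨A₀, hA₀⟩
  refine ⟨M₁, hM₁, fun A hA hGA => ?_⟩
  have hsupne : M₁ ⊔ A ≠ ⊥ := fun h => hM₁.1 (by
    rw [← le_bot_iff, ← h]; exact le_sup_left)
  have hsup : (M₁ ⊔ A) ∈ {A : Submodule Λ X | A ≠ ⊥ ∧ Gf a b (d ↥A) t₁ = 0} :=
    ⟨hsupne, ach_sup (d := d) (hiso := hiso) (hadd := hadd) (hzero := hzero)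
      hM₁.1 hM₁.2 hGA hnn⟩
  have hnlt := hmax _ hsup
  have heq : M₁ ⊔ A = M₁ := by
    by_contra hne2
    exact hnlt (lt_of_le_of_ne le_sup_left (Ne.symm hne2))
  exact le_trans le_sup_right heq.le

include hiso hadd hzero in
lemma quot_pos {t₁ : ℝ} {M₁ : Submodule Λ X} (hM : M₁ ≠ ⊥)
    (hGM : Gf a b (d ↥M₁) t₁ = 0)
    (hmax : ∀ A : Submodule Λ X, A ≠ ⊥ → Gf a b (d ↥A) t₁ = 0 → A ≤ M₁)
    (hnn : ∀ C : Submodule Λ X, 0 ≤ Gf a b (d ↥C) t₁) :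
    PosP (Λ := Λ) (d := d) (a := a) (b := b) (X ⧸ M₁) t₁ := by
  intro Ybar hY
  set C := comap M₁.mkQ Ybar with hC
  have hMC : M₁ ≤ C := by
    intro x hx
    have hx0 : M₁.mkQ x = 0 := (Submodule.Quotient.mk_eq_zero _).2 hx
    show M₁.mkQ x ∈ Ybar
    rw [hx0]
    exact zero_mem _
  have hmapC : Submodule.map M₁.mkQ C = Ybar := by
    rw [hC, Submodule.map_comap_eq, Submodule.range_mkQ, top_inf_eq]
  have hCne : C ≠ M₁ := by
    intro h
    apply hY
    rw [← hmapC, h]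
    simp
  have hMltC : M₁ < C := lt_of_le_of_ne hMC (Ne.symm hCne)
  have hdY : d (↥C ⧸ comap C.subtype M₁) = d ↥Ybar := by
    obtain ⟨e⟩ := quot_equiv_map_mkQ (X := X) (A := M₁) (B := C) hMC
    exact hiso _ _ (e.trans (LinearEquiv.ofEq _ _ hmapC))
  have h1 := hadd ↥C (comap C.subtype M₁)
  have hdcom : d ↥(comap C.subtype M₁) = d ↥M₁ :=
    hiso _ _ (Submodule.comapSubtypeEquivOfLe hMC)
  have e1 : Gf a b (d ↥C) t₁ = Gf a b (d ↥M₁) t₁ + Gf a b (d ↥Ybar) t₁ := by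
    rw [← h1, Gf_add, hdcom, hdY]
  by_contra hle
  push_neg at hle
  have hCz : Gf a b (d ↥C) t₁ = 0 := le_antisymm (by linarith) (hnn C)
  have hCne2 : C ≠ ⊥ := fun h => hM (by rw [← le_bot_iff, ← h]; exact hMC)
  exact lt_irrefl M₁ (lt_of_lt_of_le hMltC (hmax C hCne2 hCz))

end Basic

include hiso in
lemma pos_transport {N N' : Type} [AddCommGroup N] [Module Λ N] [AddCommGroup N'] [Module Λ N']
    [IsNoetherian Λ N] [IsArtinian Λ N] (e : N ≃ₗ[Λ] N') {τ : ℝ}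
    (h : PosP (Λ := Λ) (d := d) (a := a) (b := b) N τ) :
    PosP (Λ := Λ) (d := d) (a := a) (b := b) N' τ := by
  intro A' hA'
  have hd : d ↥(Submodule.map (e.symm : N' →ₗ[Λ] N) A') = d ↥A' :=
    hiso _ _ (e.symm.submoduleMap A').symm
  rw [← hd]
  refine h _ ((Submodule.ne_bot_iff _).2 ?_)
  obtain ⟨x, hx, h0⟩ := (Submodule.ne_bot_iff A').1 hA'
  refine ⟨e.symm x, Submodule.mem_map_of_mem hx, fun hz => h0 ?_⟩
  have := congrArg e hz
  simpa using this

include hiso hzero in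
lemma ss_transport {N N' : Type} [AddCommGroup N] [Module Λ N] [AddCommGroup N'] [Module Λ N']
    [IsNoetherian Λ N] [IsArtinian Λ N] (e : N ≃ₗ[Λ] N') {t : ℝ}
    (hss : Semistable d a b t N) (hmu : muZ a b t (d N) = t) :
    Semistable d a b t N' ∧ muZ a b t (d N') = t := by
  have hd : d N = d N' := hiso _ _ e
  refine ⟨?_, by rw [← hd]; exact hmu⟩
  intro M' hM'
  have hd2 : d ↥(Submodule.map (e.symm : N' →ₗ[Λ] N) M') = d ↥M' :=
    hiso _ _ (e.symm.submoduleMap M').symm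
  rw [← hd, ← hd2]
  refine hss _ ((Submodule.ne_bot_iff _).2 ?_)
  obtain ⟨x, hx, h0⟩ := (Submodule.ne_bot_iff M').1 hM'
  refine ⟨e.symm x, Submodule.mem_map_of_mem hx, fun hz => h0 ?_⟩
  have := congrArg e hz
  simpa using this

lemma strictMono_cons {α : Type*} [Preorder α] {m : ℕ} {x : α} {f : Fin m → α}
    (hf : StrictMono f) (hx : ∀ i, x < f i) : StrictMono (Fin.cons x f) := by
  intro i j hij
  rcases Fin.eq_zero_or_eq_succ j with rfl | ⟨k, rfl⟩
  · exact absurd hij (Fin.not_lt_zero i)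
  · rcases Fin.eq_zero_or_eq_succ i with rfl | ⟨l, rfl⟩
    · rw [Fin.cons_zero, Fin.cons_succ]
      exact hx k
    · rw [Fin.cons_succ, Fin.cons_succ]
      exact hf (Fin.succ_lt_succ_iff.1 hij)

lemma piece_congr {X : Type} [AddCommGroup X] [Module Λ X] {B1 B2 A1 A2 : Submodule Λ X}
    (hB : B1 = B2) (hA : A1 = A2) {t : ℝ}
    (h : Semistable d a b t (↥B1 ⧸ comap B1.subtype A1) ∧
      muZ a b t (d (↥B1 ⧸ comap B1.subtype A1)) = t) :
    Semistable d a b t (↥B2 ⧸ comap B2.subtype A2) ∧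
      muZ a b t (d (↥B2 ⧸ comap B2.subtype A2)) = t := by
  subst hB; subst hA; exact h

variable (a b) in
/-- The existence predicate: an HN-type filtration from `A` up to `⊤`. -/
@[reducible] def HNfrom (X : Type) [AddCommGroup X] [Module Λ X] (A : Submodule Λ X) : Prop :=
  ∃ (m : ℕ) (F : Fin (m+1) → Submodule Λ X) (ts : Fin m → ℝ),
    StrictMono F ∧ F 0 = A ∧ F (Fin.last m) = ⊤ ∧ StrictMono ts ∧
    (∀ i : Fin m, Semistable d a b (ts i)
        (↥(F i.succ) ⧸ comap (F i.succ).subtype (F i.castSucc)) ∧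
      muZ a b (ts i) (d (↥(F i.succ) ⧸ comap (F i.succ).subtype (F i.castSucc))) = ts i) ∧
    (∀ τ : ℝ, (∀ σ, σ ≤ τ → PosP (Λ := Λ) (d := d) (a := a) (b := b) (X ⧸ A) σ) →
      ∀ i, τ < ts i)

include hbpos hC1a hC1b hiso hadd hzero in
theorem exists_hn
    (hconst : ∃ T : ℝ, 0 < T ∧ (∀ t, T ≤ t → a t = a T ∧ b t = b T) ∧
      (∀ t, t ≤ -T → a t = a (-T) ∧ b t = b (-T)))
    (hgreen : ZGreen d a b)
    {X : Type} [AddCommGroup X] [Module Λ X] [IsNoetherian Λ X] [IsArtinian Λ X]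
    (A : Submodule Λ X) : HNfrom (d := d) (a := a) (b := b) X A := by
  have hwf : WellFounded ((· > ·) : Submodule Λ X → Submodule Λ X → Prop) :=
    IsNoetherian.wf inferInstance
  refine hwf.induction (C := HNfrom (d := d) (a := a) (b := b) X) A ?_
  clear A
  intro A IH
  by_cases hAT : A = ⊤
  · refine ⟨0, fun _ => ⊤, Fin.elim0, ?_, hAT.symm, rfl, ?_, ?_, ?_⟩
    · intro i j h
      rw [Fin.lt_def] at h
      have h1 := i.isLt
      have h2 := j.isLt
      omega
    · intro i j h
      exact i.elim0
    · intro i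
      exact i.elim0
    · intro τ _ i
      exact i.elim0
  · haveI : Nontrivial (X ⧸ A) :=
      Submodule.Quotient.nontrivial_iff.2 hAT
    have hXq : (⊤ : Submodule Λ (X ⧸ A)) ≠ ⊥ := by
      obtain ⟨x, hx⟩ := exists_ne (0 : X ⧸ A)
      exact (Submodule.ne_bot_iff _).2 ⟨x, Submodule.mem_top, hx⟩
    obtain ⟨hach, hpos, hnn⟩ := tone_spec (d := d) (hadd := hadd) (hzero := hzero)
      (hbpos := hbpos) (hC1a := hC1a) (hC1b := hC1b) (X := X ⧸ A) hconst hXq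
    set t₁ := tone d a b (X ⧸ A) with ht₁
    obtain ⟨B₁, ⟨hB₁ne, hB₁G⟩, hB₁max⟩ := max_achiever (d := d) (hiso := hiso)
      (hadd := hadd) (hzero := hzero) (X := X ⧸ A) hach hnn
    set A' := comap A.mkQ B₁ with hA'
    have hAA' : A ≤ A' := by
      intro x hx
      have hx0 : A.mkQ x = 0 := (Submodule.Quotient.mk_eq_zero _).2 hx
      show A.mkQ x ∈ B₁
      rw [hx0]
      exact zero_mem _
    have hmap : Submodule.map A.mkQ A' = B₁ := by
      rw [hA', Submodule.map_comap_eq, Submodule.range_mkQ, top_inf_eq]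
    have hA'ne : A ≠ A' := by
      intro h
      apply hB₁ne
      rw [← hmap, ← h]
      simp
    have hlt : A < A' := lt_of_le_of_ne hAA' hA'ne
    obtain ⟨m', F', ts', hF'mono, hF'0, hF'last, hts'mono, hpieces', htimes'⟩ := IH A' hlt
    have hposq : ∀ σ, σ ≤ t₁ → PosP (Λ := Λ) (d := d) (a := a) (b := b) (X ⧸ A') σ := by
      intro σ hσ
      have hq1 : PosP (Λ := Λ) (d := d) (a := a) (b := b) ((X ⧸ A) ⧸ B₁) σ :=
        key (d := d) (hiso := hiso) (hadd := hadd) (hzero := hzero) (hbpos := hbpos)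
          (hC1a := hC1a) (hC1b := hC1b) hgreen
          (quot_pos (d := d) (hiso := hiso) (hadd := hadd) (hzero := hzero)
            hB₁ne hB₁G hB₁max hnn) hσ
      have e : ((X ⧸ A) ⧸ B₁) ≃ₗ[Λ] (X ⧸ A') :=
        (Submodule.quotEquivOfEq B₁ (Submodule.map A.mkQ A') hmap.symm).trans
          (Submodule.quotientQuotientEquivQuotient A A' hAA')
      exact pos_transport (d := d) (hiso := hiso) e hq1
    have htgt : ∀ i, t₁ < ts' i := htimes' t₁ (fun σ hσ => hposq σ hσ)
    have hhead : Semistable d a b t₁ (↥A' ⧸ comap A'.subtype A) ∧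
        muZ a b t₁ (d (↥A' ⧸ comap A'.subtype A)) = t₁ := by
      have hb := semistable_builder (d := d) (hiso := hiso) (hzero := hzero)
        (hbpos := hbpos) (X := X ⧸ A) hB₁ne hB₁G (fun B _ => hnn B)
      obtain ⟨e1⟩ := quot_equiv_map_mkQ (X := X) (A := A) (B := A') hAA'
      have e := (e1.trans (LinearEquiv.ofEq _ _ hmap)).symm
      exact ss_transport (d := d) (hiso := hiso) (hzero := hzero) e hb.1 hb.2
    refine ⟨m' + 1, Fin.cons A F', Fin.cons t₁ ts', ?_, Fin.cons_zero _ _, ?_, ?_, ?_, ?_⟩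
    · rw [Fin.strictMono_iff_lt_succ]
      intro i
      refine Fin.cases ?_ ?_ i
      · rw [Fin.castSucc_zero, Fin.cons_zero, Fin.cons_succ, hF'0]
        exact hlt
      · intro j
        rw [← Fin.succ_castSucc, Fin.cons_succ, Fin.cons_succ]
        exact hF'mono (Fin.castSucc_lt_succ (i := j))
    · rw [← Fin.succ_last, Fin.cons_succ]
      exact hF'last
    · exact strictMono_cons hts'mono htgt
    · intro i
      refine Fin.cases ?_ ?_ i
      · have h1 : (Fin.cons A F' : Fin (m'+2) → Submodule Λ X) ((0 : Fin (m'+1)).succ) = A' := by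
          rw [Fin.cons_succ, hF'0]
        have h2 : (Fin.cons A F' : Fin (m'+2) → Submodule Λ X) ((0 : Fin (m'+1)).castSucc) = A := by
          rw [Fin.castSucc_zero, Fin.cons_zero]
        have h3 : (Fin.cons t₁ ts' : Fin (m'+1) → ℝ) 0 = t₁ := Fin.cons_zero _ _
        rw [h3]
        exact piece_congr (d := d) h1.symm h2.symm hhead
      · intro j
        have h1 : (Fin.cons A F' : Fin (m'+2) → Submodule Λ X) (j.succ.succ) = F' j.succ :=
          Fin.cons_succ _ _ _
        have h2 : (Fin.cons A F' : Fin (m'+2) → Submodule Λ X) (j.succ.castSucc) = F' j.castSucc := by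
          rw [← Fin.succ_castSucc, Fin.cons_succ]
        have h3 : (Fin.cons t₁ ts' : Fin (m'+1) → ℝ) j.succ = ts' j := Fin.cons_succ _ _ _
        rw [h3]
        exact piece_congr (d := d) h1.symm h2.symm (hpieces' j)
    · intro τ hPos i
      have hτt₁ : τ < t₁ := by
        by_contra hge
        push_neg at hge
        have := hPos t₁ hge B₁ hB₁ne
        rw [hB₁G] at this
        exact lt_irrefl 0 this
      refine Fin.cases ?_ ?_ i
      · rw [Fin.cons_zero]
        exact hτt₁
      · intro j
        rw [Fin.cons_succ]
        exact htimes' τ (fun σ hσ => hposq σ (le_of_lt (lt_of_le_of_lt hσ hτt₁))) j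


section Uniq

variable {X : Type} [AddCommGroup X] [Module Λ X] [IsNoetherian Λ X] [IsArtinian Λ X]

include hbpos hzero in
lemma ss_to_nonneg {Q : Type} [AddCommGroup Q] [Module Λ Q] [IsNoetherian Λ Q] [IsArtinian Λ Q]
    {t : ℝ} (hss : Semistable d a b t Q) (hmu : muZ a b t (d Q) = t) :
    ∀ W : Submodule Λ Q, 0 ≤ Gf a b (d ↥W) t := by
  intro W
  by_cases hW : W = ⊥
  · rw [hW, d_bot (d := d) (hzero := hzero), Gf_zero]
  · have h := hss W hW
    rw [hmu] at h
    exact (le_muZ_iff hbpos (d_ne_zero (d := d) (hzero := hzero) hW) t).1 h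

include hiso hadd in
lemma split_top (P Y : Submodule Λ X) :
    ∃ Z : Submodule Λ (X ⧸ P), (Z = ⊥ ↔ Y ≤ P) ∧ d ↥Y = d ↥(Y ⊓ P) + d ↥Z := by
  set ψ : ↥Y →ₗ[Λ] (X ⧸ P) := P.mkQ ∘ₗ Y.subtype with hψ
  refine ⟨LinearMap.range ψ, ?_, ?_⟩
  · rw [LinearMap.range_eq_bot]
    constructor
    · intro h y hy
      have := congrFun (congrArg DFunLike.coe h) ⟨y, hy⟩
      simpa [hψ, Submodule.Quotient.mk_eq_zero] using this
    · intro h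
      ext x
      simpa [hψ, Submodule.Quotient.mk_eq_zero] using h x.2
  · have h1 := hadd ↥Y (LinearMap.ker ψ)
    have hker : LinearMap.ker ψ = comap Y.subtype (Y ⊓ P) := by
      ext x
      simp only [hψ, LinearMap.mem_ker, LinearMap.comp_apply, Submodule.mkQ_apply,
        Submodule.Quotient.mk_eq_zero, Submodule.mem_comap]
      constructor
      · intro hx
        exact ⟨x.2, hx⟩
      · intro hx
        exact hx.2
    have e1 : ↥(LinearMap.ker ψ) ≃ₗ[Λ] ↥(Y ⊓ P) := by
      rw [hker]
      exact Submodule.comapSubtypeEquivOfLe inf_le_left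
    have e2 : (↥Y ⧸ LinearMap.ker ψ) ≃ₗ[Λ] ↥(LinearMap.range ψ) :=
      LinearMap.quotKerEquivRange ψ
    rw [← h1, hiso _ _ e1, hiso _ _ e2]

include hbpos hC1a hC1b hiso hadd hzero in
lemma filt_pos (hgreen : ZGreen d a b) {m : ℕ} {F : Fin (m+1) → Submodule Λ X}
    {ts : Fin m → ℝ} (hmono : Monotone F) (h0 : F 0 = ⊥)
    (hpieceNN : ∀ i : Fin m,
      ∀ W : Submodule Λ (↥(F i.succ) ⧸ comap (F i.succ).subtype (F i.castSucc)),
        0 ≤ Gf a b (d ↥W) (ts i))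
    {τ : ℝ} (hτ : ∀ i, τ < ts i) :
    ∀ Y : Submodule Λ X, Y ≤ F (Fin.last m) → Y ≠ ⊥ → 0 < Gf a b (d ↥Y) τ := by
  suffices h : ∀ k : Fin (m+1), ∀ Y : Submodule Λ X, Y ≤ F k → Y ≠ ⊥ →
      0 < Gf a b (d ↥Y) τ from h _
  intro k
  induction k using Fin.induction with
  | zero =>
    intro Y hY hYne
    exact absurd (le_bot_iff.1 (h0 ▸ hY)) hYne
  | succ i IH =>
    intro Y hY hYne
    obtain ⟨Z, hZbot, _, hdY⟩ :=
      split (d := d) (hiso := hiso) (hadd := hadd) (F i.castSucc) (F i.succ) Y hY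
    have hGfY : Gf a b (d ↥Y) τ = Gf a b (d ↥(Y ⊓ F i.castSucc)) τ + Gf a b (d ↥Z) τ := by
      rw [hdY, Gf_add]
    by_cases hZ : Z = ⊥
    · exact IH Y (hZbot.1 hZ) hYne
    · have h1 : 0 < Gf a b (d ↥Z) τ :=
        lemC (d := d) (hiso := hiso) (hadd := hadd) (hzero := hzero) (hbpos := hbpos)
          (hC1a := hC1a) (hC1b := hC1b) hgreen (hpieceNN i) τ (hτ i) Z hZ
      have h2 : 0 ≤ Gf a b (d ↥(Y ⊓ F i.castSucc)) τ := by
        by_cases hB : Y ⊓ F i.castSucc = ⊥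
        · rw [hB, d_bot (d := d) (hzero := hzero), Gf_zero]
        · exact (IH _ inf_le_right hB).le
      rw [hGfY]
      linarith

include hiso hzero in
/-- An HN filtration induces an HN filtration of the quotient by its first layer. -/
lemma quot_filt {m : ℕ} {F : Fin (m+2) → Submodule Λ X} {ts : Fin (m+1) → ℝ}
    (P : Submodule Λ X) (hP : P = F (0 : Fin (m+1)).succ)
    (h : IsHNFilt d a b X (m+1) F ts) :
    IsHNFilt d a b (X ⧸ P) m (fun k => Submodule.map P.mkQ (F k.succ))
      (fun i => ts i.succ) := by
  obtain ⟨hFmono, hF0, hFlast, htsmono, hpieces⟩ := h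
  have hPle : ∀ k : Fin (m+1), P ≤ F k.succ := by
    intro k
    rw [hP]
    exact hFmono.monotone (Fin.succ_le_succ_iff.2 (Fin.zero_le k))
  have hinj : ∀ C D : Submodule Λ X, P ≤ C → P ≤ D →
      Submodule.map P.mkQ C = Submodule.map P.mkQ D → C = D := by
    intro C D hC hD hmap
    have h1 := congrArg (comap P.mkQ) hmap
    rwa [Submodule.comap_map_eq, Submodule.comap_map_eq, Submodule.ker_mkQ,
      sup_eq_left.2 hC, sup_eq_left.2 hD] at h1
  refine ⟨?_, ?_, ?_, ?_, ?_⟩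
  · intro i j hij
    refine lt_of_le_of_ne
      (Submodule.map_mono (hFmono.monotone (Fin.succ_le_succ_iff.2 hij.le))) ?_
    intro he
    exact ne_of_lt (hFmono (Fin.succ_lt_succ_iff.2 hij))
      (hinj _ _ (hPle i) (hPle j) he)
  · show Submodule.map P.mkQ (F (0 : Fin (m+1)).succ) = ⊥
    rw [← hP]
    simp
  · show Submodule.map P.mkQ (F (Fin.last m).succ) = ⊤
    rw [Fin.succ_last, hFlast]
    simp [Submodule.map_top, Submodule.range_mkQ]
  · intro i j hij
    exact htsmono (Fin.succ_lt_succ_iff.2 hij)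
  · intro i
    have hPA : P ≤ F i.succ.castSucc := by
      rw [hP]
      refine hFmono.monotone ?_
      rw [Fin.le_def]
      simp
    have hAB : F i.succ.castSucc ≤ F i.succ.succ :=
      hFmono.monotone (Fin.castSucc_le_succ i.succ)
    obtain ⟨e⟩ := subquot_equiv (X := X) P (F i.succ.castSucc) (F i.succ.succ) hPA hAB
    have htrans := ss_transport (d := d) (hiso := hiso) (hzero := hzero) e
      (hpieces i.succ).1 (hpieces i.succ).2
    refine piece_congr (d := d) rfl ?_ htrans
    show Submodule.map P.mkQ (F i.succ.castSucc) = Submodule.map P.mkQ (F i.castSucc.succ)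
    rw [Fin.succ_castSucc]

include hbpos hC1a hC1b hiso hadd hzero in
/-- Head determination for an HN filtration. -/
lemma hn_head (hgreen : ZGreen d a b) {m : ℕ} {F : Fin (m+2) → Submodule Λ X}
    {ts : Fin (m+1) → ℝ} (h : IsHNFilt d a b X (m+1) F ts) :
    (∀ τ, τ < ts 0 → PosP (Λ := Λ) (d := d) (a := a) (b := b) X τ) ∧
    (∀ A : Submodule Λ X, 0 ≤ Gf a b (d ↥A) (ts 0)) ∧
    Gf a b (d ↥(F (0 : Fin (m+1)).succ)) (ts 0) = 0 ∧
    (∀ A : Submodule Λ X, A ≠ ⊥ → Gf a b (d ↥A) (ts 0) = 0 →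
      A ≤ F (0 : Fin (m+1)).succ) := by
  obtain ⟨hFmono, hF0, hFlast, htsmono, hpieces⟩ := h
  have hpieceNN : ∀ i : Fin (m+1),
      ∀ W : Submodule Λ (↥(F i.succ) ⧸ comap (F i.succ).subtype (F i.castSucc)),
        0 ≤ Gf a b (d ↥W) (ts i) := fun i =>
    ss_to_nonneg (d := d) (hzero := hzero) (hbpos := hbpos) (hpieces i).1 (hpieces i).2
  have hposbelow : ∀ τ, τ < ts 0 → PosP (Λ := Λ) (d := d) (a := a) (b := b) X τ := by
    intro τ hτ A hA
    refine filt_pos (d := d) (hiso := hiso) (hadd := hadd) (hzero := hzero)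
      (hbpos := hbpos) (hC1a := hC1a) (hC1b := hC1b) hgreen
      hFmono.monotone hF0 hpieceNN (fun i => lt_of_lt_of_le hτ ?_) A (hFlast ▸ le_top) hA
    exact htsmono.monotone (Fin.zero_le i)
  have hnn : ∀ A : Submodule Λ X, 0 ≤ Gf a b (d ↥A) (ts 0) := by
    intro A
    by_cases hA : A = ⊥
    · rw [hA, d_bot (d := d) (hzero := hzero), Gf_zero]
    · exact Gf_nonneg_left_lim hC1a hC1b (fun τ hτ => hposbelow τ hτ A hA)
  have hP₁ne : F (0 : Fin (m+1)).succ ≠ ⊥ := by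
    intro hbot
    have := hFmono (Fin.castSucc_lt_succ (i := (0 : Fin (m+1))))
    rw [Fin.castSucc_zero, hF0, hbot] at this
    exact lt_irrefl ⊥ this
  have hG1 : Gf a b (d ↥(F (0 : Fin (m+1)).succ)) (ts 0) = 0 := by
    have hp := hpieces 0
    have hcomap : comap (F (0 : Fin (m+1)).succ).subtype (F (0 : Fin (m+1)).castSucc) = ⊥ := by
      rw [Fin.castSucc_zero, hF0]
      exact Submodule.comap_bot _ |>.trans (Submodule.ker_subtype _)
    have e : (↥(F (0 : Fin (m+1)).succ) ⧸
        comap (F (0 : Fin (m+1)).succ).subtype (F (0 : Fin (m+1)).castSucc)) ≃ₗ[Λ]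
        ↥(F (0 : Fin (m+1)).succ) := Submodule.quotEquivOfEqBot _ hcomap
    have hd : d (↥(F (0 : Fin (m+1)).succ) ⧸
        comap (F (0 : Fin (m+1)).succ).subtype (F (0 : Fin (m+1)).castSucc)) =
        d ↥(F (0 : Fin (m+1)).succ) := hiso _ _ e
    have hmu := (hpieces 0).2
    rw [hd] at hmu
    exact (muZ_eq_iff hbpos (d_ne_zero (d := d) (hzero := hzero) hP₁ne) _).1 hmu
  refine ⟨hposbelow, hnn, hG1, ?_⟩
  intro A hA hGA
  by_contra hnle
  obtain ⟨Z, hZbot, hdA⟩ :=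
    split_top (d := d) (hiso := hiso) (hadd := hadd)
      (F (0 : Fin (m+1)).succ) A
  have hZne : Z ≠ ⊥ := fun hz => hnle (hZbot.1 hz)
  have hposZ : 0 < Gf a b (d ↥Z) (ts 0) := by
    rcases Nat.eq_zero_or_pos m with hm | hm
    · exfalso
      apply hnle
      subst hm
      have : (0 : Fin 1).succ = Fin.last 1 := rfl
      rw [this, hFlast]
      exact le_top
    · -- use the quotient filtration positivity
      obtain ⟨m', rfl⟩ : ∃ m', m = m' + 1 := ⟨m - 1, by omega⟩
      have hqfilt := quot_filt (d := d) (hiso := hiso) (hzero := hzero)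
        (P := F (0 : Fin (m'+2)).succ) rfl ⟨hFmono, hF0, hFlast, htsmono, hpieces⟩
      obtain ⟨hqmono, hq0, hqlast, hqts, hqpieces⟩ := hqfilt
      exact filt_pos (d := d) (hiso := hiso) (hadd := hadd) (hzero := hzero)
        (hbpos := hbpos) (hC1a := hC1a) (hC1b := hC1b) hgreen
        hqmono.monotone hq0
        (fun i => ss_to_nonneg (d := d) (hzero := hzero) (hbpos := hbpos)
          (hqpieces i).1 (hqpieces i).2)
        (fun i => htsmono (Fin.succ_pos i)) Z (le_top.trans hqlast.ge) hZne
  have hposI : 0 ≤ Gf a b (d ↥(A ⊓ F (0 : Fin (m+1)).succ)) (ts 0) := hnn _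
  rw [hdA, Gf_add] at hGA
  clear hnle
  linarith


include hbpos hC1a hC1b hiso hadd hzero in
theorem hn_unique (hgreen : ZGreen d a b) :
    ∀ (m₁ : ℕ) (X : Type) [AddCommGroup X] [Module Λ X] [IsNoetherian Λ X] [IsArtinian Λ X]
      (m₂ : ℕ) (F₁ : Fin (m₁+1) → Submodule Λ X) (ts₁ : Fin m₁ → ℝ)
      (F₂ : Fin (m₂+1) → Submodule Λ X) (ts₂ : Fin m₂ → ℝ),
      IsHNFilt d a b X m₁ F₁ ts₁ → IsHNFilt d a b X m₂ F₂ ts₂ →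
      m₁ = m₂ ∧ HEq F₁ F₂ ∧ HEq ts₁ ts₂ := by
  intro m₁
  induction m₁ with
  | zero =>
    intro X _ _ _ _ m₂ F₁ ts₁ F₂ ts₂ h₁ h₂
    have htop : (⊤ : Submodule Λ X) = ⊥ := by
      rw [← h₁.2.2.1, ← h₁.2.1]
      exact congrArg F₁ (Fin.ext (by simp))
    cases m₂ with
    | succ k =>
      exfalso
      have h01 : (0 : Fin (k+2)) < 1 := by
        rw [Fin.lt_def]
        simp
      have hlt := h₂.1 h01
      rw [h₂.2.1] at hlt
      have hle : F₂ 1 ≤ ⊥ := htop ▸ le_top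
      exact absurd (lt_of_lt_of_le hlt hle) (lt_irrefl ⊥)
    | zero =>
      refine ⟨rfl, heq_of_eq ?_, heq_of_eq ?_⟩
      · funext r
        have h0 : r = 0 := Fin.ext (by have := r.isLt; omega)
        rw [h0, h₁.2.1, h₂.2.1]
      · funext i
        exact i.elim0
  | succ m IH =>
    intro X _ _ _ _ m₂ F₁ ts₁ F₂ ts₂ h₁ h₂
    have hbotlt : (⊥ : Submodule Λ X) < ⊤ := by
      have h0l : (0 : Fin (m+2)) < Fin.last (m+1) := by
        rw [Fin.lt_def]
        simp
      have hlt := h₁.1 h0l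
      rwa [h₁.2.1, h₁.2.2.1] at hlt
    cases m₂ with
    | zero =>
      exfalso
      have htop : (⊤ : Submodule Λ X) = ⊥ := by
        rw [← h₂.2.2.1, ← h₂.2.1]
        exact congrArg F₂ (Fin.ext (by simp))
      exact absurd htop (ne_of_gt hbotlt)
    | succ k =>
      obtain ⟨hpb₁, hnn₁, hG₁, hmax₁⟩ := hn_head (d := d) (hiso := hiso) (hadd := hadd)
        (hzero := hzero) (hbpos := hbpos) (hC1a := hC1a) (hC1b := hC1b) hgreen h₁
      obtain ⟨hpb₂, hnn₂, hG₂, hmax₂⟩ := hn_head (d := d) (hiso := hiso) (hadd := hadd)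
        (hzero := hzero) (hbpos := hbpos) (hC1a := hC1a) (hC1b := hC1b) hgreen h₂
      have hP₁ne : F₁ (0 : Fin (m+1)).succ ≠ ⊥ := by
        have hlt01 := h₁.1 (Fin.castSucc_lt_succ (i := (0 : Fin (m+1))))
        rw [Fin.castSucc_zero, h₁.2.1] at hlt01
        exact ne_of_gt hlt01
      have hP₂ne : F₂ (0 : Fin (k+1)).succ ≠ ⊥ := by
        have hlt01 := h₂.1 (Fin.castSucc_lt_succ (i := (0 : Fin (k+1))))
        rw [Fin.castSucc_zero, h₂.2.1] at hlt01
        exact ne_of_gt hlt01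
      have hts : ts₁ 0 = ts₂ 0 := by
        rcases lt_trichotomy (ts₁ 0) (ts₂ 0) with h | h | h
        · exact absurd (hpb₂ _ h _ hP₁ne) (by rw [hG₁]; exact lt_irrefl 0)
        · exact h
        · exact absurd (hpb₁ _ h _ hP₂ne) (by rw [hG₂]; exact lt_irrefl 0)
      have hF1 : F₁ (0 : Fin (m+1)).succ = F₂ (0 : Fin (k+1)).succ := by
        refine le_antisymm (hmax₂ _ hP₁ne ?_) (hmax₁ _ hP₂ne ?_)
        · rw [← hts]
          exact hG₁
        · rw [hts]
          exact hG₂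
      have hq₁ := quot_filt (d := d) (hiso := hiso) (hzero := hzero)
        (P := F₁ (0 : Fin (m+1)).succ) rfl h₁
      have hq₂ := quot_filt (d := d) (hiso := hiso) (hzero := hzero)
        (P := F₁ (0 : Fin (m+1)).succ) hF1 h₂
      obtain ⟨hmk, hqF, hqts⟩ := IH (X ⧸ F₁ (0 : Fin (m+1)).succ) k _ _ _ _ hq₁ hq₂
      subst hmk
      have hqF' := eq_of_heq hqF
      have hqts' := eq_of_heq hqts
      refine ⟨rfl, heq_of_eq ?_, heq_of_eq ?_⟩
      · funext r
        rcases Fin.eq_zero_or_eq_succ r with rfl | ⟨j, rfl⟩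
        · rw [h₁.2.1, h₂.2.1]
        · have hPle₁ : F₁ (0 : Fin (m+1)).succ ≤ F₁ j.succ :=
            h₁.1.monotone (Fin.succ_le_succ_iff.2 (Fin.zero_le j))
          have hPle₂ : F₁ (0 : Fin (m+1)).succ ≤ F₂ j.succ := by
            rw [hF1]
            exact h₂.1.monotone (Fin.succ_le_succ_iff.2 (Fin.zero_le j))
          have hmapeq := congrFun hqF' j
          have hcomap := congrArg (comap (F₁ (0 : Fin (m+1)).succ).mkQ) hmapeq
          simp only [Submodule.comap_map_eq, Submodule.ker_mkQ] at hcomap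
          rwa [sup_eq_left.2 hPle₁, sup_eq_left.2 hPle₂] at hcomap
      · funext i
        rcases Fin.eq_zero_or_eq_succ i with rfl | ⟨j, rfl⟩
        · exact hts
        · exact congrFun hqts' j


include hbpos hC1a hC1b hiso hadd hzero in
lemma hn_first
    (hconst : ∃ T : ℝ, 0 < T ∧ (∀ t, T ≤ t → a t = a T ∧ b t = b T) ∧
      (∀ t, t ≤ -T → a t = a (-T) ∧ b t = b (-T)))
    (hgreen : ZGreen d a b) {m : ℕ} {F : Fin (m+2) → Submodule Λ X}
    {ts : Fin (m+1) → ℝ} (h : IsHNFilt d a b X (m+1) F ts) :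
    ts 0 = tone d a b X := by
  obtain ⟨hpb, hnn, hG₁, hmax⟩ := hn_head (d := d) (hiso := hiso) (hadd := hadd)
    (hzero := hzero) (hbpos := hbpos) (hC1a := hC1a) (hC1b := hC1b) hgreen h
  have hP₁ne : F (0 : Fin (m+1)).succ ≠ ⊥ := by
    have hlt01 := h.1 (Fin.castSucc_lt_succ (i := (0 : Fin (m+1))))
    rw [Fin.castSucc_zero, h.2.1] at hlt01
    exact ne_of_gt hlt01
  have hbound : ∀ s ∈ {s : ℝ | ∃ M' : Submodule Λ X, M' ≠ ⊥ ∧ s = tzero a b (d ↥M')},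
      ts 0 ≤ s := by
    rintro s ⟨A, hA, rfl⟩
    exact le_tz_of_pos_below hbpos hC1a hC1b hconst
      (d_ne_zero (d := d) (hzero := hzero) hA) (fun τ hτ => hpb τ hτ A hA)
  have hmem : ts 0 ∈ {s : ℝ | ∃ M' : Submodule Λ X, M' ≠ ⊥ ∧ s = tzero a b (d ↥M')} := by
    refine ⟨F (0 : Fin (m+1)).succ, hP₁ne, le_antisymm ?_ ?_⟩
    · exact hbound _ ⟨F (0 : Fin (m+1)).succ, hP₁ne, rfl⟩
    · exact tz_le_of_zero hbpos hC1a hC1b hconst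
        (d_ne_zero (d := d) (hzero := hzero) hP₁ne) hG₁
  exact le_antisymm (le_csInf ⟨_, hmem⟩ hbound) (csInf_le ⟨ts 0, hbound⟩ hmem)

end Uniq

end Modules
end HNaux

/-- For a green nonlinear stability function `Z_•`, every `Λ`-module `M`
admits a unique Harder–Narasimhan filtration: unique `t₁ < ... < t_m` and a unique
filtration `0 = M₀ ⊊ M₁ ⊊ ... ⊊ M_m = M` with `M_k/M_{k−1}` `Z_{t_k}`-semistable of slope
`μ_{t_k} = t_k`; moreover `t₁ = t₁(M)`. -/
theorem stmt11 (Λ : Type) [Ring Λ] {n : ℕ}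
    (d : (N : Type) → [AddCommGroup N] → [Module Λ N] → Fin n → ℕ)
    (hiso : ∀ (N N' : Type) [AddCommGroup N] [Module Λ N] [AddCommGroup N'] [Module Λ N']
      [IsNoetherian Λ N] [IsArtinian Λ N], (N ≃ₗ[Λ] N') → d N = d N')
    (hadd : ∀ (N : Type) [AddCommGroup N] [Module Λ N] [IsNoetherian Λ N] [IsArtinian Λ N]
      (A : Submodule Λ N), d ↥A + d (N ⧸ A) = d N)
    (hzero : ∀ (N : Type) [AddCommGroup N] [Module Λ N] [IsNoetherian Λ N] [IsArtinian Λ N],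
      (d N = 0 ↔ ∀ y : N, y = 0))
    (a b : ℝ → Fin n → ℝ)
    (hbpos : ∀ t i, 0 < b t i)
    (hC1a : ∀ i, ContDiff ℝ 1 (fun t => a t i))
    (hC1b : ∀ i, ContDiff ℝ 1 (fun t => b t i))
    (hconst : ∃ T : ℝ, 0 < T ∧ (∀ t, T ≤ t → a t = a T ∧ b t = b T) ∧
      (∀ t, t ≤ -T → a t = a (-T) ∧ b t = b (-T)))
    (hgreen : ZGreen d a b)
    (M : Type) [AddCommGroup M] [Module Λ M] [IsNoetherian Λ M] [IsArtinian Λ M] :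
    ∃ (m : ℕ) (F : Fin (m + 1) → Submodule Λ M) (ts : Fin m → ℝ),
      IsHNFilt d a b M m F ts ∧
      (∀ (m' : ℕ) (F' : Fin (m' + 1) → Submodule Λ M) (ts' : Fin m' → ℝ),
        IsHNFilt d a b M m' F' ts' → m' = m ∧ HEq F' F ∧ HEq ts' ts) ∧
      (∀ h : 0 < m, ts ⟨0, h⟩ = tone d a b M) := by
  obtain ⟨m, F, ts, hmono, hF0, hFlast, htsmono, hpieces, -⟩ :=
    HNaux.exists_hn (d := d) (hiso := hiso) (hadd := hadd) (hzero := hzero)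
      (hbpos := hbpos) (hC1a := hC1a) (hC1b := hC1b) hconst hgreen (X := M) ⊥
  have hfilt : IsHNFilt d a b M m F ts := ⟨hmono, hF0, hFlast, htsmono, hpieces⟩
  refine ⟨m, F, ts, hfilt, ?_, ?_⟩
  · intro m' F' ts' h'
    exact HNaux.hn_unique (d := d) (hiso := hiso) (hadd := hadd) (hzero := hzero)
      (hbpos := hbpos) (hC1a := hC1a) (hC1b := hC1b) hgreen m' M m F' ts' F ts h' hfilt
  · intro hm
    obtain ⟨m'', rfl⟩ : ∃ m'', m = m'' + 1 := ⟨m - 1, by omega⟩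
    have hfirst := HNaux.hn_first (d := d) (hiso := hiso) (hadd := hadd) (hzero := hzero)
      (hbpos := hbpos) (hC1a := hC1a) (hC1b := hC1b) hconst hgreen (X := M) hfilt
    rw [show (⟨0, hm⟩ : Fin (m'' + 1)) = 0 from Fin.ext rfl]
    exact hfirst
end
end

section
/- Let Z_• be a green nonlinear stability function, M a Λ-module. Define t₀(M) as the smallest t with μ_t(M)=t and t₁(M) as the minimum of t₀(M') over nonzero submodules M' ⊆ M. If M is Z_t-semistable with μ_t(M)=t for some t, then t = t₀(M) = t₁(M). Conversely, if t₀(M) = t₁(M), then M is Z_{t₀(M)}-semistable. -/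
open scoped BigOperators

noncomputable section

section StabilityHelpers

variable {n : ℕ} {a b : ℝ → Fin n → ℝ}

lemma dprod_pos {b : Fin n → ℝ} (hb : ∀ i, 0 < b i) {v : Fin n → ℕ} (hv : v ≠ 0) :
    0 < dprod b v := by
  obtain ⟨i, hi⟩ := Function.ne_iff.mp hv
  refine Finset.sum_pos' (fun j _ => ?_) ⟨i, Finset.mem_univ i, ?_⟩
  · exact mul_nonneg (hb j).le (Nat.cast_nonneg _)
  · have h1 : 0 < (v i : ℝ) := by exact_mod_cast Nat.pos_of_ne_zero hi
    exact mul_pos (hb i) h1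

lemma contMu (hC1a : ∀ i, ContDiff ℝ 1 (fun t => a t i))
    (hC1b : ∀ i, ContDiff ℝ 1 (fun t => b t i)) (hbpos : ∀ t i, 0 < b t i)
    {v : Fin n → ℕ} (hv : v ≠ 0) : Continuous fun t => muZ a b t v := by
  simp only [muZ, dprod]
  refine Continuous.div ?_ ?_ ?_
  · exact continuous_finset_sum _ (fun i _ => ((hC1a i).continuous.mul continuous_const))
  · exact continuous_finset_sum _ (fun i _ => ((hC1b i).continuous.mul continuous_const))
  · intro t
    exact (dprod_pos (hbpos t) hv).ne'

lemma diffMu (hC1a : ∀ i, ContDiff ℝ 1 (fun t => a t i))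
    (hC1b : ∀ i, ContDiff ℝ 1 (fun t => b t i)) (hbpos : ∀ t i, 0 < b t i)
    {v : Fin n → ℕ} (hv : v ≠ 0) (t : ℝ) :
    DifferentiableAt ℝ (fun t => muZ a b t v) t := by
  simp only [muZ, dprod]
  refine DifferentiableAt.div ?_ ?_ ?_
  · exact DifferentiableAt.fun_sum fun i _ =>
      (((hC1a i).differentiable one_ne_zero).differentiableAt).mul (differentiableAt_const _)
  · exact DifferentiableAt.fun_sum fun i _ =>
      (((hC1b i).differentiable one_ne_zero).differentiableAt).mul (differentiableAt_const _)
  · exact (dprod_pos (hbpos t) hv).ne'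

lemma muBound (hC1a : ∀ i, ContDiff ℝ 1 (fun t => a t i))
    (hC1b : ∀ i, ContDiff ℝ 1 (fun t => b t i)) (hbpos : ∀ t i, 0 < b t i)
    (hconst : ∃ T : ℝ, 0 < T ∧ (∀ t, T ≤ t → a t = a T ∧ b t = b T) ∧
      (∀ t, t ≤ -T → a t = a (-T) ∧ b t = b (-T))) :
    ∃ C : ℝ, 0 < C ∧ ∀ t (v : Fin n → ℕ), v ≠ 0 → |muZ a b t v| ≤ C := by
  obtain ⟨T, hT, hTp, hTm⟩ := hconst
  have key : ∀ i, ∃ Ci : ℝ, ∀ t, |a t i| ≤ Ci * b t i := by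
    intro i
    have hcont : ContinuousOn (fun t => |a t i| / b t i) (Set.Icc (-T) T) :=
      ((hC1a i).continuous.abs.div (hC1b i).continuous (fun t => (hbpos t i).ne')).continuousOn
    obtain ⟨Ci, hCi⟩ := isCompact_Icc.bddAbove_image hcont
    have hmem : ∀ t ∈ Set.Icc (-T) T, |a t i| / b t i ≤ Ci := by
      intro t ht
      exact hCi (Set.mem_image_of_mem _ ht)
    have hall : ∀ t, |a t i| / b t i ≤ Ci := by
      intro t
      rcases le_total t (-T) with h | h
      · have h1 := (hTm t h).1
        have h2 := (hTm t h).2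
        rw [h1, h2]
        exact hmem (-T) ⟨le_refl _, by linarith⟩
      rcases le_total T t with h' | h'
      · have h1 := (hTp t h').1
        have h2 := (hTp t h').2
        rw [h1, h2]
        exact hmem T ⟨by linarith, le_refl _⟩
      · exact hmem t ⟨h, h'⟩
    exact ⟨Ci, fun t => (div_le_iff₀ (hbpos t i)).mp (hall t)⟩
  choose Ci hCi using key
  set C0 : ℝ := ∑ i, max (Ci i) 0 with hC0def
  have hC0i : ∀ i, Ci i ≤ C0 := fun i =>
    le_trans (le_max_left _ _)
      (Finset.single_le_sum (f := fun j => max (Ci j) 0)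
        (fun j _ => le_max_right _ _) (Finset.mem_univ i))
  have hC0nn : 0 ≤ C0 := Finset.sum_nonneg fun j _ => le_max_right _ _
  refine ⟨C0 + 1, by linarith, ?_⟩
  intro t v hv
  have hd := dprod_pos (hbpos t) hv
  rw [muZ, abs_div, abs_of_pos hd, div_le_iff₀ hd]
  calc |dprod (a t) v| ≤ ∑ i, |a t i * (v i : ℝ)| := Finset.abs_sum_le_sum_abs _ _
    _ ≤ ∑ i, (C0 + 1) * (b t i * (v i : ℝ)) := by
        refine Finset.sum_le_sum fun i _ => ?_
        rw [abs_mul, abs_of_nonneg (by positivity : (0:ℝ) ≤ (v i : ℝ))]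
        have h1 : |a t i| ≤ (C0 + 1) * b t i := by
          have := hCi i t
          nlinarith [hC0i i, hbpos t i]
        have h2 : (0:ℝ) ≤ (v i : ℝ) := by positivity
        calc |a t i| * (v i : ℝ) ≤ ((C0 + 1) * b t i) * (v i : ℝ) :=
              mul_le_mul_of_nonneg_right h1 h2
          _ = (C0 + 1) * (b t i * (v i : ℝ)) := by ring
    _ = (C0 + 1) * dprod (b t) v := by rw [dprod, Finset.mul_sum]

lemma fixBddBelow {C : ℝ} (hC : ∀ t (v : Fin n → ℕ), v ≠ 0 → |muZ a b t v| ≤ C)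
    {v : Fin n → ℕ} (hv : v ≠ 0) : ∀ z ∈ {t : ℝ | muZ a b t v = t}, -C ≤ z := by
  intro z hz
  have h1 := (abs_le.mp (hC z v hv)).1
  rw [Set.mem_setOf_eq] at hz
  linarith [hz ▸ h1]

lemma tzero_fix (hC1a : ∀ i, ContDiff ℝ 1 (fun t => a t i))
    (hC1b : ∀ i, ContDiff ℝ 1 (fun t => b t i)) (hbpos : ∀ t i, 0 < b t i)
    {C : ℝ} (hCpos : 0 < C) (hC : ∀ t (v : Fin n → ℕ), v ≠ 0 → |muZ a b t v| ≤ C)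
    {v : Fin n → ℕ} (hv : v ≠ 0) :
    muZ a b (tzero a b v) v = tzero a b v ∧ -C ≤ tzero a b v := by
  have hcont : Continuous fun t => muZ a b t v := contMu hC1a hC1b hbpos hv
  set Z := {t : ℝ | muZ a b t v = t} with hZ
  have hbdd : BddBelow Z := ⟨-C, fixBddBelow hC hv⟩
  have hclosed : IsClosed Z := isClosed_eq hcont continuous_id
  have hne : Z.Nonempty := by
    have hcg : ContinuousOn (fun t => muZ a b t v - t) (Set.Icc (-(C+1)) (C+1)) :=
      (hcont.sub continuous_id).continuousOn
    have hA : -(C+1) ≤ C+1 := by linarith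
    have hmem : (0:ℝ) ∈ Set.Icc ((fun t => muZ a b t v - t) (C+1))
        ((fun t => muZ a b t v - t) (-(C+1))) := by
      constructor
      · have := (abs_le.mp (hC (C+1) v hv)).2
        simp only
        linarith
      · have := (abs_le.mp (hC (-(C+1)) v hv)).1
        simp only
        linarith
    obtain ⟨x, _, hx⟩ := intermediate_value_Icc' hA hcg hmem
    exact ⟨x, by rw [hZ, Set.mem_setOf_eq]; simpa [sub_eq_zero] using hx⟩
  have hmem : sInf Z ∈ Z := hclosed.csInf_mem hne hbdd
  exact ⟨hmem, fixBddBelow hC hv _ hmem⟩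

lemma le_muZ_of_le_tzero (hC1a : ∀ i, ContDiff ℝ 1 (fun t => a t i))
    (hC1b : ∀ i, ContDiff ℝ 1 (fun t => b t i)) (hbpos : ∀ t i, 0 < b t i)
    {C : ℝ} (hCpos : 0 < C) (hC : ∀ t (v : Fin n → ℕ), v ≠ 0 → |muZ a b t v| ≤ C)
    {v : Fin n → ℕ} (hv : v ≠ 0) (r : ℝ) (hr : r ≤ tzero a b v) : r ≤ muZ a b r v := by
  by_contra hcon
  push_neg at hcon
  have hcont : Continuous fun t => muZ a b t v := contMu hC1a hC1b hbpos hv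
  have hbdd : BddBelow {t : ℝ | muZ a b t v = t} := ⟨-C, fixBddBelow hC hv⟩
  have hrC : -C < r := by
    have := (abs_le.mp (hC r v hv)).1
    linarith
  have hcg : ContinuousOn (fun t => muZ a b t v - t) (Set.Icc (-(C+1)) r) :=
    (hcont.sub continuous_id).continuousOn
  have hA : -(C+1) ≤ r := by linarith
  have hmem : (0:ℝ) ∈ Set.Icc ((fun t => muZ a b t v - t) r)
      ((fun t => muZ a b t v - t) (-(C+1))) := by
    constructor
    · simp only
      linarith
    · have := (abs_le.mp (hC (-(C+1)) v hv)).1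
      simp only
      linarith
  obtain ⟨x, hxIcc, hx⟩ := intermediate_value_Icc' hA hcg hmem
  have hxZ : x ∈ {t : ℝ | muZ a b t v = t} := by
    rw [Set.mem_setOf_eq]
    simpa [sub_eq_zero] using hx
  have h1 : tzero a b v ≤ x := csInf_le hbdd hxZ
  have h2 : x ≤ r := hxIcc.2
  have hxr : x = r := by linarith
  rw [Set.mem_setOf_eq, hxr] at hxZ
  linarith

lemma green_local {Λ : Type} [Ring Λ]
    {d : (N : Type) → [AddCommGroup N] → [Module Λ N] → Fin n → ℕ}
    (hC1a : ∀ i, ContDiff ℝ 1 (fun t => a t i))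
    (hC1b : ∀ i, ContDiff ℝ 1 (fun t => b t i)) (hbpos : ∀ t i, 0 < b t i)
    (hgreen : ZGreen d a b)
    (N : Type) [AddCommGroup N] [Module Λ N] [IsNoetherian Λ N] [IsArtinian Λ N]
    (hN0 : ∃ y : N, y ≠ 0) (hdv : d N ≠ 0) (s : ℝ)
    (hss : Semistable d a b s N) (hmu : muZ a b s (d N) = s) :
    (∀ᶠ r in nhdsWithin s (Set.Iio s), r < muZ a b r (d N)) ∧
    (∀ᶠ r in nhdsWithin s (Set.Ioi s), muZ a b r (d N) < r) := by
  have hdiff : DifferentiableAt ℝ (fun t => muZ a b t (d N)) s :=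
    diffMu hC1a hC1b hbpos hdv s
  have hlt : deriv (fun t => muZ a b t (d N)) s < 1 := hgreen N s hN0 hss hmu
  have hder : HasDerivAt (fun t => muZ a b t (d N) - t)
      (deriv (fun t => muZ a b t (d N)) s - 1) s :=
    hdiff.hasDerivAt.sub (hasDerivAt_id s)
  have hslope := hasDerivAt_iff_tendsto_slope.mp hder
  have hev : ∀ᶠ r in nhdsWithin s {s}ᶜ,
      slope (fun t => muZ a b t (d N) - t) s r < 0 :=
    hslope.eventually_lt_const (by linarith)
  have hfs : muZ a b s (d N) - s = 0 := by rw [hmu]; ring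
  constructor
  · have h1 := hev.filter_mono (nhdsWithin_mono s (fun x hx => ne_of_lt hx))
    filter_upwards [h1, eventually_mem_nhdsWithin] with r hr hrs
    rw [slope_def_field, hfs, sub_zero] at hr
    rcases div_neg_iff.mp hr with ⟨h2, _⟩ | ⟨_, h3⟩
    · linarith
    · exfalso
      have : r < s := hrs
      linarith
  · have h1 := hev.filter_mono (nhdsWithin_mono s (fun x hx => ne_of_gt hx))
    filter_upwards [h1, eventually_mem_nhdsWithin] with r hr hrs
    rw [slope_def_field, hfs, sub_zero] at hr
    rcases div_neg_iff.mp hr with ⟨_, h2⟩ | ⟨h3, _⟩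
    · exfalso
      have : s < r := hrs
      linarith
    · linarith

end StabilityHelpers

/-- For a green nonlinear stability function and a module `M`: if `M` is
`Z_t`-semistable with `μ_t(M) = t` for some `t`, then `t = t₀(M) = t₁(M)`; conversely, if
`t₀(M) = t₁(M)` then `M` is `Z_{t₀(M)}`-semistable. -/
theorem stmt12 (Λ : Type) [Ring Λ] {n : ℕ}
    (d : (N : Type) → [AddCommGroup N] → [Module Λ N] → Fin n → ℕ)
    (hiso : ∀ (N N' : Type) [AddCommGroup N] [Module Λ N] [AddCommGroup N'] [Module Λ N']
      [IsNoetherian Λ N] [IsArtinian Λ N], (N ≃ₗ[Λ] N') → d N = d N')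
    (hadd : ∀ (N : Type) [AddCommGroup N] [Module Λ N] [IsNoetherian Λ N] [IsArtinian Λ N]
      (A : Submodule Λ N), d ↥A + d (N ⧸ A) = d N)
    (hzero : ∀ (N : Type) [AddCommGroup N] [Module Λ N] [IsNoetherian Λ N] [IsArtinian Λ N],
      (d N = 0 ↔ ∀ y : N, y = 0))
    (a b : ℝ → Fin n → ℝ)
    (hbpos : ∀ t i, 0 < b t i)
    (hC1a : ∀ i, ContDiff ℝ 1 (fun t => a t i))
    (hC1b : ∀ i, ContDiff ℝ 1 (fun t => b t i))
    (hconst : ∃ T : ℝ, 0 < T ∧ (∀ t, T ≤ t → a t = a T ∧ b t = b T) ∧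
      (∀ t, t ≤ -T → a t = a (-T) ∧ b t = b (-T)))
    (hgreen : ZGreen d a b)
    (M : Type) [AddCommGroup M] [Module Λ M] [IsNoetherian Λ M] [IsArtinian Λ M]
    (hM0 : ∃ y : M, y ≠ 0) :
    (∀ t : ℝ, Semistable d a b t M → muZ a b t (d M) = t →
      t = tzero a b (d M) ∧ t = tone d a b M) ∧
    (tzero a b (d M) = tone d a b M → Semistable d a b (tzero a b (d M)) M) := by
  classical
  obtain ⟨C, hCpos, hC⟩ := muBound (a := a) (b := b) hC1a hC1b hbpos hconst
  -- basic dimension-vector facts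
  have ddne : ∀ N : Submodule Λ M, N ≠ ⊥ → d ↥N ≠ 0 := by
    intro N hN
    rw [Ne, hzero ↥N]
    obtain ⟨x, hxN, hx⟩ := (Submodule.ne_bot_iff N).mp hN
    intro h
    exact hx (by simpa using congrArg Subtype.val (h ⟨x, hxN⟩))
  have hdM : d M ≠ 0 := by
    rw [Ne, hzero M]
    obtain ⟨y, hy⟩ := hM0
    exact fun h => hy (h y)
  have dtop : d ↥(⊤ : Submodule Λ M) = d M := hiso _ _ Submodule.topEquiv
  have htopne : (⊤ : Submodule Λ M) ≠ ⊥ := by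
    obtain ⟨y, hy⟩ := hM0
    intro h
    exact hy (by simpa using (Submodule.eq_bot_iff _).mp h y trivial)
  have dsub : ∀ (N : Submodule Λ M) (N' : Submodule Λ ↥N), N' ≠ ⊥ →
      ∃ K : Submodule Λ M, K ≠ ⊥ ∧ d ↥K = d ↥N' := by
    intro N N' hN'
    refine ⟨N'.map N.subtype, ?_,
      (hiso _ _ (Submodule.equivMapOfInjective N.subtype N.injective_subtype N')).symm⟩
    obtain ⟨x, hxN, hx⟩ := (Submodule.ne_bot_iff N').mp hN'
    refine (Submodule.ne_bot_iff _).mpr ⟨(x : M), ?_, ?_⟩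
    · exact ⟨x, hxN, rfl⟩
    · simpa using hx
  have dle : ∀ N : Submodule Λ M, d ↥N ∈ Set.Icc (0 : Fin n → ℕ) (d M) := by
    intro N
    refine ⟨fun i => Nat.zero_le _, fun i => ?_⟩
    have h1 := congrFun (hadd M N) i
    simp only [Pi.add_apply] at h1
    calc d ↥N i ≤ d ↥N i + d (M ⧸ N) i := Nat.le_add_right _ _
      _ = d M i := h1
  -- facts about the tone set
  have hSfin : {s : ℝ | ∃ M' : Submodule Λ M, M' ≠ ⊥ ∧ s = tzero a b (d ↥M')}.Finite := by
    apply Set.Finite.subset ((Set.finite_Icc (0 : Fin n → ℕ) (d M)).image (tzero a b))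
    rintro s ⟨N, hN, rfl⟩
    exact ⟨d ↥N, dle N, rfl⟩
  have hSne : {s : ℝ | ∃ M' : Submodule Λ M, M' ≠ ⊥ ∧ s = tzero a b (d ↥M')}.Nonempty :=
    ⟨tzero a b (d ↥(⊤ : Submodule Λ M)), ⊤, htopne, rfl⟩
  have hSbdd : BddBelow {s : ℝ | ∃ M' : Submodule Λ M, M' ≠ ⊥ ∧ s = tzero a b (d ↥M')} := by
    refine ⟨-C, ?_⟩
    rintro s ⟨N, hN, rfl⟩
    exact (tzero_fix hC1a hC1b hbpos hCpos hC (ddne N hN)).2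
  have htone_mem : ∃ M' : Submodule Λ M, M' ≠ ⊥ ∧ tone d a b M = tzero a b (d ↥M') :=
    hSne.csInf_mem hSfin
  have htone_le : ∀ N : Submodule Λ M, N ≠ ⊥ → tone d a b M ≤ tzero a b (d ↥N) :=
    fun N hN => csInf_le hSbdd ⟨N, hN, rfl⟩
  -- semistability criterion
  have nzsub : ∀ N : Submodule Λ M, N ≠ ⊥ → ∃ y : ↥N, y ≠ 0 := by
    intro N hN
    obtain ⟨x, hxN, hx⟩ := (Submodule.ne_bot_iff N).mp hN
    exact ⟨⟨x, hxN⟩, by simpa using hx⟩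
  have semi_of : ∀ (N : Submodule Λ M) (r : ℝ), muZ a b r (d ↥N) = r →
      (∀ K : Submodule Λ M, K ≠ ⊥ → r ≤ muZ a b r (d ↥K)) → Semistable d a b r ↥N := by
    intro N r hmu hall N' hN'
    obtain ⟨K, hK, hdK⟩ := dsub N N' hN'
    rw [hmu, ← hdK]
    exact hall K hK
  -- the key lemma
  have key : ∀ s : ℝ, (∀ K : Submodule Λ M, K ≠ ⊥ → s ≤ muZ a b s (d ↥K)) →
      s ≤ tone d a b M := by
    intro s hs
    by_contra hcon
    push_neg at hcon
    obtain ⟨M', hM', hM'eq⟩ := htone_mem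
    have hfix : muZ a b (tone d a b M) (d ↥M') = tone d a b M := by
      rw [hM'eq]
      exact (tzero_fix hC1a hC1b hbpos hCpos hC (ddne M' hM')).1
    have hsemi : Semistable d a b (tone d a b M) ↥M' := by
      refine semi_of M' _ hfix ?_
      intro K hK
      exact le_muZ_of_le_tzero hC1a hC1b hbpos hCpos hC (ddne K hK) _ (htone_le K hK)
    have hgr := green_local hC1a hC1b hbpos hgreen ↥M' (nzsub M' hM') (ddne M' hM')
      (tone d a b M) hsemi hfix
    have hevlt : ∀ᶠ r in nhdsWithin (tone d a b M) (Set.Ioi (tone d a b M)),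
        muZ a b r (d ↥M') < r ∧ r < s := by
      have h2 : ∀ᶠ r in nhdsWithin (tone d a b M) (Set.Ioi (tone d a b M)), r < s :=
        (eventually_lt_nhds hcon).filter_mono nhdsWithin_le_nhds
      exact hgr.2.and h2
    obtain ⟨r₀, hr₀⟩ := (hevlt.and eventually_mem_nhdsWithin).exists
    obtain ⟨⟨hr₀M', hr₀s⟩, hr₀t₁⟩ := hr₀
    -- the closed set A
    set A : Set ℝ := Set.Icc r₀ s ∩ ⋂ (K : Submodule Λ M) (_ : K ≠ ⊥),
      {r : ℝ | r ≤ muZ a b r (d ↥K)} with hA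
    have hmemA : ∀ r, r ∈ A ↔ (r ∈ Set.Icc r₀ s ∧
        ∀ K : Submodule Λ M, K ≠ ⊥ → r ≤ muZ a b r (d ↥K)) := by
      intro r
      simp [hA, Set.mem_iInter]
    have hsA : s ∈ A := (hmemA s).mpr ⟨⟨le_of_lt hr₀s, le_refl s⟩, hs⟩
    have hAclosed : IsClosed A := by
      refine isClosed_Icc.inter (isClosed_iInter fun K => isClosed_iInter fun hK => ?_)
      exact isClosed_le continuous_id (contMu hC1a hC1b hbpos (ddne K hK))
    have hAbdd : BddBelow A := ⟨r₀, fun r hr => ((hmemA r).mp hr).1.1⟩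
    have hAne : A.Nonempty := ⟨s, hsA⟩
    have hs₂A : sInf A ∈ A := hAclosed.csInf_mem hAne hAbdd
    obtain ⟨hs₂Icc, hs₂all⟩ := (hmemA _).mp hs₂A
    have hr₀s₂ : r₀ < sInf A := by
      rcases lt_or_eq_of_le hs₂Icc.1 with h | h
      · exact h
      · exfalso
        have h2 := hs₂all M' hM'
        rw [← h] at h2
        linarith
    have hviol : ∀ᶠ r in nhdsWithin (sInf A) (Set.Iio (sInf A)),
        ∃ v ∈ Set.Icc (0 : Fin n → ℕ) (d M),
          (∃ K : Submodule Λ M, K ≠ ⊥ ∧ d ↥K = v) ∧ muZ a b r v < r := by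
      have h1 : ∀ᶠ r in nhdsWithin (sInf A) (Set.Iio (sInf A)), r₀ < r :=
        (eventually_gt_nhds hr₀s₂).filter_mono nhdsWithin_le_nhds
      filter_upwards [h1, eventually_mem_nhdsWithin] with r hr₀r hrs₂
      have hrs₂' : r < sInf A := hrs₂
      have hrA : r ∉ A := fun hrA => absurd (csInf_le hAbdd hrA) (not_le.mpr hrs₂')
      have hrIcc : r ∈ Set.Icc r₀ s := ⟨hr₀r.le, le_trans (le_of_lt hrs₂') hs₂Icc.2⟩
      rw [hmemA r, not_and] at hrA
      have h3 := hrA hrIcc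
      push_neg at h3
      obtain ⟨K, hK, hKlt⟩ := h3
      exact ⟨d ↥K, dle K, ⟨K, hK, rfl⟩, hKlt⟩
    by_cases hcase : ∃ v ∈ Set.Icc (0 : Fin n → ℕ) (d M),
        (∃ K : Submodule Λ M, K ≠ ⊥ ∧ d ↥K = v) ∧
          (∃ᶠ r in nhdsWithin (sInf A) (Set.Iio (sInf A)), muZ a b r v < r)
    · obtain ⟨v, hvIcc, ⟨W, hW, hdW⟩, hfreq⟩ := hcase
      have hvne : v ≠ 0 := hdW ▸ ddne W hW
      have hge : sInf A ≤ muZ a b (sInf A) v := by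
        rw [← hdW]
        exact hs₂all W hW
      have hnlt : ¬ sInf A < muZ a b (sInf A) v := by
        intro hlt
        have hop : IsOpen {r : ℝ | r < muZ a b r v} :=
          isOpen_lt continuous_id (contMu hC1a hC1b hbpos hvne)
        have h2 : ∀ᶠ r in nhdsWithin (sInf A) (Set.Iio (sInf A)), r < muZ a b r v :=
          (hop.eventually_mem hlt).filter_mono nhdsWithin_le_nhds
        obtain ⟨r, h3, h4⟩ := (hfreq.and_eventually h2).exists
        linarith
      have hfx : muZ a b (sInf A) v = sInf A := le_antisymm (not_lt.mp hnlt) hge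
      have hWsemi : Semistable d a b (sInf A) ↥W :=
        semi_of W (sInf A) (by rw [hdW]; exact hfx) hs₂all
      have hgr2 := green_local hC1a hC1b hbpos hgreen ↥W (nzsub W hW) (ddne W hW)
        (sInf A) hWsemi (by rw [hdW]; exact hfx)
      obtain ⟨r, h3, h4⟩ := (hfreq.and_eventually hgr2.1).exists
      rw [hdW] at h4
      linarith
    · push_neg at hcase
      have hev : ∀ᶠ r in nhdsWithin (sInf A) (Set.Iio (sInf A)),
          ∀ v ∈ Set.Icc (0 : Fin n → ℕ) (d M),
            (∃ K : Submodule Λ M, K ≠ ⊥ ∧ d ↥K = v) → ¬ (muZ a b r v < r) := by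
        rw [(Set.finite_Icc (0 : Fin n → ℕ) (d M)).eventually_all]
        intro v hv
        by_cases hKv : ∃ K : Submodule Λ M, K ≠ ⊥ ∧ d ↥K = v
        · have h5 := hcase v hv hKv
          exact h5.mono fun r hr _ => not_lt.mpr hr
        · filter_upwards with r h
          exact absurd h hKv
      have hfalse : ∀ᶠ _r in nhdsWithin (sInf A) (Set.Iio (sInf A)), False := by
        filter_upwards [hviol, hev] with r h1 h2
        obtain ⟨v, hv1, hv2, hv3⟩ := h1
        exact h2 v hv1 hv2 hv3
      exact (inferInstance : (nhdsWithin (sInf A) (Set.Iio (sInf A))).NeBot).ne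
        (Filter.eventually_false_iff_eq_bot.mp hfalse)
  -- conclusion
  have tzbdd : BddBelow {t : ℝ | muZ a b t (d M) = t} := ⟨-C, fixBddBelow hC hdM⟩
  constructor
  · intro t hsem hmu
    have h1 : t ≤ tone d a b M := by
      refine key t ?_
      intro K hK
      have h5 := hsem K hK
      rw [hmu] at h5
      exact h5
    have h2 : tone d a b M ≤ tzero a b (d M) := by
      have h3 := htone_le ⊤ htopne
      rwa [dtop] at h3
    have h3 : tzero a b (d M) ≤ t := csInf_le tzbdd hmu
    exact ⟨le_antisymm (h1.trans h2) h3, le_antisymm h1 (h2.trans h3)⟩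
  · intro heq K hK
    have hfx : muZ a b (tzero a b (d M)) (d M) = tzero a b (d M) :=
      (tzero_fix hC1a hC1b hbpos hCpos hC hdM).1
    rw [hfx]
    have h4 : tzero a b (d M) ≤ tzero a b (d ↥K) := by
      rw [heq]
      exact htone_le K hK
    exact le_muZ_of_le_tzero hC1a hC1b hbpos hCpos hC (ddne K hK) _ h4
end
end

section
/- Let Z_• be a green nonlinear stability function, M a module, and M₁ ⊆ M the maximal submodule with t₀(M₁) = t₁(M). If M₁ ≠ M, then t₁(M/M₁) > t₁(M). -/
open scoped BigOperators

noncomputable section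

/-! ### Auxiliary analysis lemmas -/

section analysisAux
variable {n : ℕ} {a b : ℝ → Fin n → ℝ}

lemma dprod_add' (x : Fin n → ℝ) (u w : Fin n → ℕ) :
    dprod x (u + w) = dprod x u + dprod x w := by
  simp [dprod, mul_add, Finset.sum_add_distrib]

lemma dprod_b_pos (hbpos : ∀ t i, 0 < b t i) {v : Fin n → ℕ} (hv : v ≠ 0) (t : ℝ) :
    0 < dprod (b t) v := by
  have : ∃ i, v i ≠ 0 := by
    by_contra h; push_neg at h; exact hv (funext h)
  obtain ⟨i, hi⟩ := this
  apply Finset.sum_pos'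
  · intro j _; exact mul_nonneg (hbpos t j).le (Nat.cast_nonneg _)
  · exact ⟨i, Finset.mem_univ i,
      mul_pos (hbpos t i) (by exact_mod_cast Nat.pos_of_ne_zero hi)⟩

lemma muZ_differentiable (hbpos : ∀ t i, 0 < b t i)
    (hC1a : ∀ i, ContDiff ℝ 1 (fun t => a t i)) (hC1b : ∀ i, ContDiff ℝ 1 (fun t => b t i))
    {v : Fin n → ℕ} (hv : v ≠ 0) :
    Differentiable ℝ (fun t => muZ a b t v) := by
  have hA : Differentiable ℝ (fun t => dprod (a t) v) := by
    simp only [dprod]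
    exact Differentiable.fun_sum (fun i _ => ((hC1a i).differentiable one_ne_zero).mul_const _)
  have hB : Differentiable ℝ (fun t => dprod (b t) v) := by
    simp only [dprod]
    exact Differentiable.fun_sum (fun i _ => ((hC1b i).differentiable one_ne_zero).mul_const _)
  exact hA.div hB (fun t => (dprod_b_pos hbpos hv t).ne')

lemma muZ_continuous (hbpos : ∀ t i, 0 < b t i)
    (hC1a : ∀ i, ContDiff ℝ 1 (fun t => a t i)) (hC1b : ∀ i, ContDiff ℝ 1 (fun t => b t i))
    {v : Fin n → ℕ} (hv : v ≠ 0) :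
    Continuous (fun t => muZ a b t v) :=
  (muZ_differentiable hbpos hC1a hC1b hv).continuous

/-- uniform bound on slopes -/
lemma muZ_bound (hbpos : ∀ t i, 0 < b t i)
    (hC1a : ∀ i, ContDiff ℝ 1 (fun t => a t i)) (hC1b : ∀ i, ContDiff ℝ 1 (fun t => b t i))
    (hconst : ∃ T : ℝ, 0 < T ∧ (∀ t, T ≤ t → a t = a T ∧ b t = b T) ∧
      (∀ t, t ≤ -T → a t = a (-T) ∧ b t = b (-T))) :
    ∃ C : ℝ, ∀ (v : Fin n → ℕ), v ≠ 0 → ∀ t, |muZ a b t v| ≤ C := by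
  obtain ⟨T, hT, hTa, hTb⟩ := hconst
  set G : ℝ → ℝ := fun t => ∑ i, |a t i| / b t i with hG
  have hGcont : Continuous G := by
    apply continuous_finset_sum
    intro i _
    exact (((hC1a i).continuous).abs).div ((hC1b i).continuous) (fun t => (hbpos t i).ne')
  obtain ⟨x₀, hx₀, hmax⟩ := isCompact_Icc.exists_isMaxOn (s := Set.Icc (-T) T)
    ⟨0, by constructor <;> linarith⟩ hGcont.continuousOn
  refine ⟨G x₀, fun v hv t => ?_⟩
  have hGle : ∀ s, G s ≤ G x₀ := by
    intro s
    rcases le_total s (-T) with h | h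
    · have ha := (hTb s h).1; have hb := (hTb s h).2
      have : G s = G (-T) := by simp only [hG, ha, hb]
      rw [this]; exact hmax ⟨le_refl _, by linarith⟩
    rcases le_total T s with h2 | h2
    · have ha := (hTa s h2).1; have hb := (hTa s h2).2
      have : G s = G T := by simp only [hG, ha, hb]
      rw [this]; exact hmax ⟨by linarith, le_refl _⟩
    · exact hmax ⟨h, h2⟩
  have hB := dprod_b_pos hbpos hv t
  have habs : |dprod (a t) v| ≤ G t * dprod (b t) v := by
    calc |dprod (a t) v| ≤ ∑ i, |a t i * (v i : ℝ)| := Finset.abs_sum_le_sum_abs _ _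
    _ ≤ ∑ i, (G t * (b t i * (v i : ℝ))) := by
        apply Finset.sum_le_sum
        intro i _
        rw [abs_mul, abs_of_nonneg (by positivity : (0:ℝ) ≤ (v i : ℝ))]
        rw [← mul_assoc]
        apply mul_le_mul_of_nonneg_right _ (by positivity)
        have h1 : |a t i| / b t i ≤ G t := by
          apply Finset.single_le_sum (f := fun j => |a t j| / b t j) _ (Finset.mem_univ i)
          intro j _; exact div_nonneg (abs_nonneg _) (hbpos t j).le
        calc |a t i| = (|a t i| / b t i) * b t i := by
              rw [div_mul_cancel₀ _ (hbpos t i).ne']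
          _ ≤ G t * b t i := mul_le_mul_of_nonneg_right h1 (hbpos t i).le
    _ = G t * dprod (b t) v := by rw [dprod, Finset.mul_sum]
  have : |muZ a b t v| ≤ G t := by
    rw [muZ, abs_div, abs_of_pos hB, div_le_iff₀ hB]
    exact habs
  exact this.trans (hGle t)

variable {C : ℝ} {v : Fin n → ℕ}

lemma tzero_spec (hcont : Continuous (fun t => muZ a b t v))
    (hC : ∀ t, |muZ a b t v| ≤ C) :
    muZ a b (tzero a b v) v = tzero a b v := by
  have hclosed : IsClosed {t | muZ a b t v = t} := isClosed_eq hcont continuous_id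
  have hbdd : BddBelow {t | muZ a b t v = t} := by
    refine ⟨-C, fun t ht => ?_⟩
    have := hC t
    rw [ht] at this
    exact (abs_le.mp this).1
  have hne : {t | muZ a b t v = t}.Nonempty := by
    set g : ℝ → ℝ := fun t => muZ a b t v - t with hg
    have hgc : Continuous g := hcont.sub continuous_id
    have hC0 : 0 ≤ C := le_trans (abs_nonneg _) (hC 0)
    have h1 : 0 < g (-(C+1)) := by
      have h2 := (abs_le.mp (hC (-(C+1)))).1
      have : g (-(C+1)) = muZ a b (-(C+1)) v - (-(C+1)) := rfl
      rw [this]; linarith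
    have h2 : g (C+1) < 0 := by
      have h3 := (abs_le.mp (hC (C+1))).2
      have : g (C+1) = muZ a b (C+1) v - (C+1) := rfl
      rw [this]; linarith
    have hle : -(C+1) ≤ C+1 := by linarith
    obtain ⟨z, _, hz⟩ := intermediate_value_Icc' hle hgc.continuousOn
      (Set.mem_Icc.mpr ⟨h2.le, h1.le⟩)
    exact ⟨z, by simpa [hg, sub_eq_zero] using hz⟩
  exact hclosed.csInf_mem hne hbdd

lemma fix_bddBelow (hC : ∀ t, |muZ a b t v| ≤ C) :
    BddBelow {t | muZ a b t v = t} := by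
  refine ⟨-C, fun t ht => ?_⟩
  have := hC t
  rw [ht] at this
  exact (abs_le.mp this).1

lemma tzero_le_of_fixed (hC : ∀ t, |muZ a b t v| ≤ C) {t : ℝ}
    (ht : muZ a b t v = t) : tzero a b v ≤ t :=
  csInf_le (fix_bddBelow hC) ht

lemma neg_C_le_tzero (hcont : Continuous (fun t => muZ a b t v))
    (hC : ∀ t, |muZ a b t v| ≤ C) : -C ≤ tzero a b v := by
  have h := tzero_spec hcont hC
  have := hC (tzero a b v)
  rw [h] at this
  exact (abs_le.mp this).1

lemma lt_muZ_of_lt_tzero (hcont : Continuous (fun t => muZ a b t v))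
    (hC : ∀ t, |muZ a b t v| ≤ C) {t : ℝ} (ht : t < tzero a b v) :
    t < muZ a b t v := by
  by_contra h
  push_neg at h
  rcases eq_or_lt_of_le h with heq | hlt
  · exact absurd (tzero_le_of_fixed hC heq) (not_le.mpr ht)
  · set g : ℝ → ℝ := fun s => muZ a b s v - s with hg
    have hgc : Continuous g := hcont.sub continuous_id
    set l : ℝ := -(C+1) - |t| with hl
    have hlt' : l < t := by
      have : -|t| ≤ t := neg_abs_le t
      have hC0 : 0 ≤ C := le_trans (abs_nonneg _) (hC 0)
      simp only [hl]; linarith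
    have hgl : 0 < g l := by
      have h3 := (abs_le.mp (hC l)).1
      have h4 : (0:ℝ) ≤ |t| := abs_nonneg t
      have : g l = muZ a b l v - l := rfl
      rw [this, hl]; linarith
    have hgt : g t < 0 := by
      have : g t = muZ a b t v - t := rfl
      rw [this]; linarith
    obtain ⟨z, hz1, hz2⟩ := intermediate_value_Icc' hlt'.le hgc.continuousOn
      (Set.mem_Icc.mpr ⟨hgt.le, hgl.le⟩)
    have hzfix : muZ a b z v = z := by
      have h5 : muZ a b z v - z = 0 := hz2
      linarith
    have := tzero_le_of_fixed hC hzfix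
    have := hz1.2
    linarith

lemma le_muZ_of_le_tzero_s14 (hcont : Continuous (fun t => muZ a b t v))
    (hC : ∀ t, |muZ a b t v| ≤ C) {t : ℝ} (ht : t ≤ tzero a b v) :
    t ≤ muZ a b t v := by
  rcases eq_or_lt_of_le ht with heq | hlt
  · rw [heq]; exact (tzero_spec hcont hC).ge
  · exact (lt_muZ_of_lt_tzero hcont hC hlt).le

end analysisAux

/-! ### Auxiliary derivative lemmas -/

section slopeAux
variable {f : ℝ → ℝ}

lemma exists_lt_right_of_deriv_lt_one {t' m : ℝ} (hf : HasDerivAt f m t') (hm : m < 1)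
    (hfix : f t' = t') {r : ℝ} (hr : t' < r) : ∃ s, t' < s ∧ s < r ∧ f s < s := by
  have hφ : HasDerivAt (fun u => f u - u) (m - 1) t' := hf.sub (hasDerivAt_id t')
  have hslope := hasDerivAt_iff_tendsto_slope.mp hφ
  have hneg : m - 1 < 0 := by linarith
  have hev : ∀ᶠ u in nhdsWithin t' {t'}ᶜ, slope (fun u => f u - u) t' u < 0 :=
    hslope (Iio_mem_nhds hneg)
  have hmono : nhdsWithin t' (Set.Ioi t') ≤ nhdsWithin t' {t'}ᶜ :=
    nhdsWithin_mono t' (fun x hx => ne_of_gt hx)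
  have hev2 : ∀ᶠ u in nhdsWithin t' (Set.Ioi t'),
      slope (fun u => f u - u) t' u < 0 ∧ u ∈ Set.Ioo t' r := by
    filter_upwards [hmono hev, Ioo_mem_nhdsGT_of_mem (Set.mem_Ico.mpr ⟨le_refl _, hr⟩)]
      with u h1 h2
    exact ⟨h1, h2⟩
  obtain ⟨u, hu1, hu2⟩ := hev2.exists
  refine ⟨u, hu2.1, hu2.2, ?_⟩
  have hd : (0:ℝ) < u - t' := by linarith [hu2.1]
  have : slope (fun u => f u - u) t' u = (f u - u - (f t' - t')) / (u - t') := by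
    simp [slope, div_eq_inv_mul]
  rw [this, hfix, sub_self, sub_zero] at hu1
  rcases div_neg_iff.mp hu1 with ⟨h1, h2⟩ | ⟨h1, h2⟩
  · linarith
  · linarith

lemma one_le_deriv_of_lt_left {s s₂ m : ℝ} (hf : HasDerivAt f m s₂)
    (hs : s < s₂) (hneg : ∀ u, s < u → u < s₂ → f u < u) (hfix : f s₂ = s₂) :
    1 ≤ m := by
  by_contra hm
  push_neg at hm
  have hφ : HasDerivAt (fun u => f u - u) (m - 1) s₂ := hf.sub (hasDerivAt_id s₂)
  have hslope := hasDerivAt_iff_tendsto_slope.mp hφ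
  have hneg' : m - 1 < 0 := by linarith
  have hev : ∀ᶠ u in nhdsWithin s₂ {s₂}ᶜ, slope (fun u => f u - u) s₂ u < 0 :=
    hslope (Iio_mem_nhds hneg')
  have hmono : nhdsWithin s₂ (Set.Iio s₂) ≤ nhdsWithin s₂ {s₂}ᶜ :=
    nhdsWithin_mono s₂ (fun x hx => ne_of_lt hx)
  have hev2 : ∀ᶠ u in nhdsWithin s₂ (Set.Iio s₂),
      slope (fun u => f u - u) s₂ u < 0 ∧ u ∈ Set.Ioo s s₂ := by
    filter_upwards [hmono hev, Ioo_mem_nhdsLT_of_mem (Set.mem_Ioc.mpr ⟨hs, le_refl _⟩)]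
      with u h1 h2
    exact ⟨h1, h2⟩
  obtain ⟨u, hu1, hu2⟩ := hev2.exists
  have hd : u - s₂ < 0 := by linarith [hu2.2]
  have heq : slope (fun u => f u - u) s₂ u = (f u - u - (f s₂ - s₂)) / (u - s₂) := by
    simp [slope, div_eq_inv_mul]
  rw [heq, hfix, sub_self, sub_zero] at hu1
  have hfu : f u - u < 0 := by linarith [hneg u hu2.1 hu2.2]
  have : 0 < (f u - u) / (u - s₂) := div_pos_of_neg_of_neg hfu hd
  linarith

end slopeAux

/-! ### Auxiliary module-theoretic lemmas -/

section moduleAux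
variable {Λ : Type} [Ring Λ] {n : ℕ}
variable {d : (N : Type) → [AddCommGroup N] → [Module Λ N] → Fin n → ℕ}

lemma submodule_nonzero_elt {X : Type} [AddCommGroup X] [Module Λ X]
    {B : Submodule Λ X} (hB : B ≠ ⊥) : ∃ y : ↥B, y ≠ 0 := by
  obtain ⟨x, hx, hx0⟩ := (Submodule.ne_bot_iff B).mp hB
  exact ⟨⟨x, hx⟩, fun h => hx0 (by simpa using congrArg Subtype.val h)⟩

lemma d_ne_zero
    (hzero : ∀ (N : Type) [AddCommGroup N] [Module Λ N] [IsNoetherian Λ N] [IsArtinian Λ N],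
      (d N = 0 ↔ ∀ y : N, y = 0))
    {X : Type} [AddCommGroup X] [Module Λ X] [IsNoetherian Λ X] [IsArtinian Λ X]
    (hX : ∃ y : X, y ≠ 0) : d X ≠ 0 := by
  intro h
  obtain ⟨y, hy⟩ := hX
  exact hy ((hzero X).mp h y)

lemma d_map_subtype
    (hiso : ∀ (N N' : Type) [AddCommGroup N] [Module Λ N] [AddCommGroup N'] [Module Λ N']
      [IsNoetherian Λ N] [IsArtinian Λ N], (N ≃ₗ[Λ] N') → d N = d N')
    {X : Type} [AddCommGroup X] [Module Λ X] [IsNoetherian Λ X] [IsArtinian Λ X]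
    (B : Submodule Λ X) (M' : Submodule Λ ↥B) :
    d ↥M' = d ↥(M'.map B.subtype) :=
  hiso _ _ (Submodule.equivMapOfInjective B.subtype (Submodule.injective_subtype B) M')

lemma dprod_split
    (hadd : ∀ (N : Type) [AddCommGroup N] [Module Λ N] [IsNoetherian Λ N] [IsArtinian Λ N]
      (A : Submodule Λ N), d ↥A + d (N ⧸ A) = d N)
    {X : Type} [AddCommGroup X] [Module Λ X] [IsNoetherian Λ X] [IsArtinian Λ X]
    (B : Submodule Λ X) (x : Fin n → ℝ) :
    dprod x (d X) = dprod x (d ↥B) + dprod x (d (X ⧸ B)) := by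
  rw [← hadd X B, dprod_add']

lemma d_le
    (hadd : ∀ (N : Type) [AddCommGroup N] [Module Λ N] [IsNoetherian Λ N] [IsArtinian Λ N]
      (A : Submodule Λ N), d ↥A + d (N ⧸ A) = d N)
    {X : Type} [AddCommGroup X] [Module Λ X] [IsNoetherian Λ X] [IsArtinian Λ X]
    (B : Submodule Λ X) : d ↥B ≤ d X := by
  intro i
  rw [← hadd X B]
  exact Nat.le_add_right _ _

lemma key_split
    (hiso : ∀ (N N' : Type) [AddCommGroup N] [Module Λ N] [AddCommGroup N'] [Module Λ N']
      [IsNoetherian Λ N] [IsArtinian Λ N], (N ≃ₗ[Λ] N') → d N = d N')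
    (hadd : ∀ (N : Type) [AddCommGroup N] [Module Λ N] [IsNoetherian Λ N] [IsArtinian Λ N]
      (A : Submodule Λ N), d ↥A + d (N ⧸ A) = d N)
    {M : Type} [AddCommGroup M] [Module Λ M] [IsNoetherian Λ M] [IsArtinian Λ M]
    (M₁ : Submodule Λ M) (B : Submodule Λ (M ⧸ M₁)) (x : Fin n → ℝ) :
    dprod x (d ↥(B.comap M₁.mkQ)) = dprod x (d ↥M₁) + dprod x (d ↥B) := by
  set N : Submodule Λ M := B.comap M₁.mkQ with hN
  have hM₁N : M₁ ≤ N := by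
    intro m hm
    have : M₁.mkQ m = 0 := (Submodule.Quotient.mk_eq_zero M₁).mpr hm
    simp [hN, Submodule.mem_comap, this]
  set A : Submodule Λ ↥N := M₁.comap N.subtype with hA
  have h1 : d ↥A = d ↥M₁ := hiso _ _ (Submodule.comapSubtypeEquivOfLe hM₁N)
  set g : ↥N →ₗ[Λ] M ⧸ M₁ := M₁.mkQ.comp N.subtype with hg
  have hker : LinearMap.ker g = A := by
    rw [hg, LinearMap.ker_comp, Submodule.ker_mkQ]
  have hrange : LinearMap.range g = B := by
    rw [hg, LinearMap.range_comp, Submodule.range_subtype]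
    exact Submodule.map_comap_eq_self (by rw [Submodule.range_mkQ]; exact le_top)
  have h2 : d (↥N ⧸ A) = d ↥B := by
    refine hiso _ _ ?_
    exact (Submodule.quotEquivOfEq _ _ hker.symm).trans
      (g.quotKerEquivRange.trans (LinearEquiv.ofEq _ _ hrange))
  rw [← hadd ↥N A, dprod_add', h1, h2]

end moduleAux

/-- For a green nonlinear stability function, a module `M`, and `M₁ ⊆ M`
the maximal submodule with `t₀(M₁) = t₁(M)`: if `M₁ ≠ M` then `t₁(M/M₁) > t₁(M)`. -/
theorem stmt14 (Λ : Type) [Ring Λ] {n : ℕ}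
    (d : (N : Type) → [AddCommGroup N] → [Module Λ N] → Fin n → ℕ)
    (hiso : ∀ (N N' : Type) [AddCommGroup N] [Module Λ N] [AddCommGroup N'] [Module Λ N']
      [IsNoetherian Λ N] [IsArtinian Λ N], (N ≃ₗ[Λ] N') → d N = d N')
    (hadd : ∀ (N : Type) [AddCommGroup N] [Module Λ N] [IsNoetherian Λ N] [IsArtinian Λ N]
      (A : Submodule Λ N), d ↥A + d (N ⧸ A) = d N)
    (hzero : ∀ (N : Type) [AddCommGroup N] [Module Λ N] [IsNoetherian Λ N] [IsArtinian Λ N],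
      (d N = 0 ↔ ∀ y : N, y = 0))
    (a b : ℝ → Fin n → ℝ)
    (hbpos : ∀ t i, 0 < b t i)
    (hC1a : ∀ i, ContDiff ℝ 1 (fun t => a t i))
    (hC1b : ∀ i, ContDiff ℝ 1 (fun t => b t i))
    (hconst : ∃ T : ℝ, 0 < T ∧ (∀ t, T ≤ t → a t = a T ∧ b t = b T) ∧
      (∀ t, t ≤ -T → a t = a (-T) ∧ b t = b (-T)))
    (hgreen : ZGreen d a b)
    (M : Type) [AddCommGroup M] [Module Λ M] [IsNoetherian Λ M] [IsArtinian Λ M]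
    (hM0 : ∃ y : M, y ≠ 0)
    (M₁ : Submodule Λ M) (hM₁0 : M₁ ≠ ⊥)
    (hM₁t : tzero a b (d ↥M₁) = tone d a b M)
    (hM₁max : ∀ N : Submodule Λ M, N ≠ ⊥ → tzero a b (d ↥N) = tone d a b M → N ≤ M₁)
    (hne : M₁ ≠ ⊤) :
    tone d a b M < tone d a b (M ⧸ M₁) := by
  classical
  obtain ⟨C, hC⟩ := muZ_bound hbpos hC1a hC1b hconst
  have hcontv : ∀ {v : Fin n → ℕ}, v ≠ 0 → Continuous (fun t => muZ a b t v) :=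
    fun hv => muZ_continuous hbpos hC1a hC1b hv
  have hdM : ∀ (N' : Submodule Λ M), N' ≠ ⊥ → d ↥N' ≠ 0 :=
    fun N' h => d_ne_zero hzero (submodule_nonzero_elt h)
  have hdQ : ∀ (B : Submodule Λ (M ⧸ M₁)), B ≠ ⊥ → d ↥B ≠ 0 :=
    fun B h => d_ne_zero hzero (submodule_nonzero_elt h)
  have hSbdd : BddBelow {s : ℝ | ∃ M' : Submodule Λ M, M' ≠ ⊥ ∧ s = tzero a b (d ↥M')} := by
    refine ⟨-C, fun s hs => ?_⟩
    obtain ⟨N', hN', rfl⟩ := hs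
    exact neg_C_le_tzero (hcontv (hdM N' hN')) (hC _ (hdM N' hN'))
  have hSle : ∀ N' : Submodule Λ M, N' ≠ ⊥ → tone d a b M ≤ tzero a b (d ↥N') :=
    fun N' h => csInf_le hSbdd ⟨N', h, rfl⟩
  have hμM₁ : muZ a b (tone d a b M) (d ↥M₁) = tone d a b M := by
    have := tzero_spec (hcontv (hdM M₁ hM₁0)) (hC _ (hdM M₁ hM₁0))
    rwa [hM₁t] at this
  have hbM₁ : ∀ t, 0 < dprod (b t) (d ↥M₁) := fun t => dprod_b_pos hbpos (hdM M₁ hM₁0) t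
  -- the preimage in `M` of any submodule of `M ⧸ M₁` is nonzero
  have hcomap_bot : ∀ B : Submodule Λ (M ⧸ M₁), B.comap M₁.mkQ ≠ ⊥ := by
    intro B hbot
    have hM₁N : M₁ ≤ B.comap M₁.mkQ := by
      intro m hm
      have h0 : M₁.mkQ m = 0 := (Submodule.Quotient.mk_eq_zero M₁).mpr hm
      simp [Submodule.mem_comap, h0]
    rw [hbot, le_bot_iff] at hM₁N
    exact hM₁0 hM₁N
  -- the preimage of a nonzero submodule cannot have tzero equal to tone M
  have hcomap_ne : ∀ B : Submodule Λ (M ⧸ M₁), B ≠ ⊥ →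
      tzero a b (d ↥(B.comap M₁.mkQ)) ≠ tone d a b M := by
    intro B hB h
    have hle := hM₁max _ (hcomap_bot B) h
    have hmap : (B.comap M₁.mkQ).map M₁.mkQ = B :=
      Submodule.map_comap_eq_self (by rw [Submodule.range_mkQ]; exact le_top)
    have h2 : B ≤ M₁.map M₁.mkQ := by rw [← hmap]; exact Submodule.map_mono hle
    have hbot : M₁.map M₁.mkQ ≤ ⊥ :=
      Submodule.map_le_iff_le_comap.mpr
        (by rw [Submodule.comap_bot, Submodule.ker_mkQ])
    rw [le_bot_iff.mp hbot, le_bot_iff] at h2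
    exact hB h2
  -- KEY CLAIM: every nonzero submodule of M ⧸ M₁ has slope > tone M at time tone M
  have claim : ∀ B : Submodule Λ (M ⧸ M₁), B ≠ ⊥ →
      tone d a b M < muZ a b (tone d a b M) (d ↥B) := by
    intro B hB
    have hdN := hdM _ (hcomap_bot B)
    have hlt : tone d a b M < tzero a b (d ↥(B.comap M₁.mkQ)) :=
      lt_of_le_of_ne (hSle _ (hcomap_bot B)) (hcomap_ne B hB).symm
    have hμN := lt_muZ_of_lt_tzero (hcontv hdN) (hC _ hdN) hlt
    have hq := hbM₁ (tone d a b M)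
    have hw : 0 < dprod (b (tone d a b M)) (d ↥B) := dprod_b_pos hbpos (hdQ B hB) _
    rw [muZ] at hμN hμM₁ ⊢
    rw [key_split hiso hadd M₁ B (a (tone d a b M)),
        key_split hiso hadd M₁ B (b (tone d a b M))] at hμN
    rw [lt_div_iff₀ (by linarith : (0:ℝ) < dprod (b (tone d a b M)) (d ↥M₁)
        + dprod (b (tone d a b M)) (d ↥B))] at hμN
    rw [lt_div_iff₀ hw]
    have hp := (div_eq_iff hq.ne').mp hμM₁
    have hexp : tone d a b M * (dprod (b (tone d a b M)) (d ↥M₁)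
        + dprod (b (tone d a b M)) (d ↥B))
        = tone d a b M * dprod (b (tone d a b M)) (d ↥M₁)
        + tone d a b M * dprod (b (tone d a b M)) (d ↥B) := mul_add _ _ _
    linarith
  -- DESCENT: no nonzero submodule of M ⧸ M₁ can have slope < s at a time s < tone M
  have desc : ∀ X : Submodule Λ (M ⧸ M₁), X ≠ ⊥ → ∀ s, s < tone d a b M →
      ¬ (muZ a b s (d ↥X) < s) := by
    have hwf : WellFounded ((· < ·) : Submodule Λ (M ⧸ M₁) → Submodule Λ (M ⧸ M₁) → Prop) :=
      wellFounded_lt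
    refine fun X => hwf.induction
      (C := fun X => X ≠ ⊥ → ∀ s, s < tone d a b M → ¬ (muZ a b s (d ↥X) < s)) X ?_
    clear X
    intro X ih hX0 s hs hμ
    have hdX := hdQ X hX0
    have hcX := hcontv hdX
    have hclaimX := claim X hX0
    set Z : Set ℝ := Set.Icc s (tone d a b M) ∩ {r | r ≤ muZ a b r (d ↥X)} with hZ
    have hZclosed : IsClosed Z := isClosed_Icc.inter (isClosed_le continuous_id hcX)
    have hZne : Z.Nonempty := ⟨tone d a b M, ⟨hs.le, le_rfl⟩, hclaimX.le⟩
    have hZbdd : BddBelow Z := ⟨s, fun r hr => hr.1.1⟩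
    obtain ⟨s₂, hs₂, hs₂lb⟩ : ∃ s₂, s₂ ∈ Z ∧ ∀ r ∈ Z, s₂ ≤ r :=
      ⟨sInf Z, hZclosed.csInf_mem hZne hZbdd, fun r hr => csInf_le hZbdd hr⟩
    have hs₂le : s₂ ≤ muZ a b s₂ (d ↥X) := hs₂.2
    have hss₂ : s < s₂ := by
      rcases lt_or_eq_of_le hs₂.1.1 with h | h
      · exact h
      · exfalso; rw [← h] at hs₂le; exact absurd hs₂le (not_le.mpr hμ)
    have hmid : ∀ u, s < u → u < s₂ → muZ a b u (d ↥X) < u := by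
      intro u h1 h2
      by_contra hcon
      push_neg at hcon
      have hu : u ∈ Z := ⟨⟨h1.le, h2.le.trans hs₂.1.2⟩, hcon⟩
      exact absurd (hs₂lb u hu) (not_le.mpr h2)
    have hfix : muZ a b s₂ (d ↥X) = s₂ := by
      rcases eq_or_lt_of_le hs₂le with h | h
      · exact h.symm
      · exfalso
        have hpos : 0 < muZ a b s₂ (d ↥X) - s₂ := by linarith
        have hev : ∀ᶠ u in nhds s₂, 0 < muZ a b u (d ↥X) - u :=
          ((hcX.sub continuous_id).tendsto s₂).eventually (eventually_gt_nhds hpos)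
        have hev2 : ∀ᶠ u in nhdsWithin s₂ (Set.Iio s₂),
            (0 < muZ a b u (d ↥X) - u) ∧ u ∈ Set.Ioo s s₂ := by
          filter_upwards [nhdsWithin_le_nhds hev,
            Ioo_mem_nhdsLT_of_mem (Set.mem_Ioc.mpr ⟨hss₂, le_refl _⟩)] with u h1 h2
          exact ⟨h1, h2⟩
        obtain ⟨u, hu1, hu2⟩ := hev2.exists
        have := hmid u hu2.1 hu2.2
        linarith
    have hs₂t₁ : s₂ < tone d a b M := by
      rcases lt_or_eq_of_le hs₂.1.2 with h | h
      · exact h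
      · exfalso; rw [h] at hfix; linarith
    have hX0' := submodule_nonzero_elt hX0
    have hnotss : ¬ Semistable d a b s₂ ↥X := by
      intro hss
      have hder := hgreen ↥X s₂ hX0' hss hfix
      have hhd : HasDerivAt (fun t => muZ a b t (d ↥X))
          (deriv (fun t => muZ a b t (d ↥X)) s₂) s₂ :=
        ((muZ_differentiable hbpos hC1a hC1b hdX) s₂).hasDerivAt
      exact absurd (one_le_deriv_of_lt_left hhd hss₂ hmid hfix) (not_le.mpr hder)
    rw [Semistable] at hnotss
    push_neg at hnotss
    obtain ⟨M', hM'0, hM'lt⟩ := hnotss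
    rw [hfix] at hM'lt
    have hdm := d_map_subtype hiso X M'
    rw [hdm] at hM'lt
    have hmapne : M'.map X.subtype ≠ ⊥ := by
      intro h
      exact hM'0 (Submodule.map_injective_of_injective (Submodule.injective_subtype X)
        (h.trans (Submodule.map_bot X.subtype).symm))
    have hlt2 : M'.map X.subtype < X := by
      refine lt_of_le_of_ne (Submodule.map_subtype_le X M') ?_
      intro h
      rw [h] at hM'lt
      linarith [hfix]
    exact ih _ hlt2 hmapne s₂ hs₂t₁ hM'lt
  -- setup for the quotient module
  have hq0 : ∃ y : M ⧸ M₁, y ≠ 0 := by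
    obtain ⟨x, hx⟩ : ∃ x, x ∉ M₁ := by
      by_contra h
      push_neg at h
      exact hne (Submodule.eq_top_iff'.mpr h)
    exact ⟨M₁.mkQ x, fun h => hx ((Submodule.Quotient.mk_eq_zero M₁).mp h)⟩
  have htop : (⊤ : Submodule Λ (M ⧸ M₁)) ≠ ⊥ := by
    intro h
    obtain ⟨y, hy⟩ := hq0
    exact hy (by rw [← Submodule.mem_bot (R := Λ), ← h]; exact Submodule.mem_top)
  set S' : Set ℝ := {s | ∃ K : Submodule Λ (M ⧸ M₁), K ≠ ⊥ ∧ s = tzero a b (d ↥K)} with hS'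
  have hS'ne : S'.Nonempty := ⟨tzero a b (d ↥(⊤ : Submodule Λ (M ⧸ M₁))), ⊤, htop, rfl⟩
  have hS'fin : S'.Finite := by
    apply Set.Finite.subset ((Set.finite_Icc (0 : Fin n → ℕ) (d (M ⧸ M₁))).image (tzero a b))
    rintro s ⟨K, hK, rfl⟩
    exact ⟨d ↥K, ⟨fun i => Nat.zero_le _, d_le hadd K⟩, rfl⟩
  have hS'bdd : BddBelow S' := hS'fin.bddBelow
  have hS'le : ∀ K' : Submodule Λ (M ⧸ M₁), K' ≠ ⊥ →
      tone d a b (M ⧸ M₁) ≤ tzero a b (d ↥K') :=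
    fun K' h => csInf_le hS'bdd ⟨K', h, rfl⟩
  have htone' : tone d a b (M ⧸ M₁) ∈ S' := Set.Nonempty.csInf_mem hS'ne hS'fin
  obtain ⟨K, hK0, hKt⟩ := htone'
  by_contra hcon
  push_neg at hcon
  rw [hKt] at hcon
  have hdK := hdQ K hK0
  have hKfix : muZ a b (tzero a b (d ↥K)) (d ↥K) = tzero a b (d ↥K) :=
    tzero_spec (hcontv hdK) (hC _ hdK)
  rcases eq_or_lt_of_le hcon with heq | hlt
  · -- case tzero (d K) = tone M
    have hμK : muZ a b (tone d a b M) (d ↥K) = tone d a b M := by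
      rw [heq] at hKfix; exact hKfix
    have hfixN : muZ a b (tone d a b M) (d ↥(K.comap M₁.mkQ)) = tone d a b M := by
      have hq := hbM₁ (tone d a b M)
      have hw : 0 < dprod (b (tone d a b M)) (d ↥K) := dprod_b_pos hbpos hdK _
      rw [muZ, key_split hiso hadd M₁ K (a (tone d a b M)),
          key_split hiso hadd M₁ K (b (tone d a b M))]
      rw [muZ] at hμM₁ hμK
      rw [div_eq_iff (by linarith : (dprod (b (tone d a b M)) (d ↥M₁)
          + dprod (b (tone d a b M)) (d ↥K)) ≠ 0)]
      have h1 := (div_eq_iff hq.ne').mp hμM₁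
      have h2 := (div_eq_iff hw.ne').mp hμK
      rw [mul_add]
      linarith
    have hle2 : tzero a b (d ↥(K.comap M₁.mkQ)) ≤ tone d a b M :=
      tzero_le_of_fixed (hC _ (hdM _ (hcomap_bot K))) hfixN
    exact hcomap_ne K hK0 (le_antisymm hle2 (hSle _ (hcomap_bot K)))
  · -- case tzero (d K) < tone M
    have hss : Semistable d a b (tzero a b (d ↥K)) ↥K := by
      intro M' hM'0
      have hmapne : M'.map K.subtype ≠ ⊥ := by
        intro h
        exact hM'0 (Submodule.map_injective_of_injective (Submodule.injective_subtype K)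
          (h.trans (Submodule.map_bot K.subtype).symm))
      have hd' := hdQ _ hmapne
      have hle : tzero a b (d ↥K) ≤ tzero a b (d ↥(M'.map K.subtype)) := by
        rw [← hKt]; exact hS'le _ hmapne
      have hmu := le_muZ_of_le_tzero_s14 (hcontv hd') (hC _ hd') hle
      rw [hKfix, d_map_subtype hiso K M']
      exact hmu
    have hX0' := submodule_nonzero_elt hK0
    have hder := hgreen ↥K (tzero a b (d ↥K)) hX0' hss hKfix
    have hhd : HasDerivAt (fun t => muZ a b t (d ↥K))
        (deriv (fun t => muZ a b t (d ↥K)) (tzero a b (d ↥K))) (tzero a b (d ↥K)) :=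
      ((muZ_differentiable hbpos hC1a hC1b hdK) (tzero a b (d ↥K))).hasDerivAt
    obtain ⟨s, hs1, hs2, hs3⟩ := exists_lt_right_of_deriv_lt_one hhd hder hKfix hlt
    exact desc K hK0 s hs2 hs3
end
end

section
/- For a nonlinear stability function Z_t(x) = a_t·x + i b_t·x with corresponding path γ_Z(t) = t·b_t − a_t: if γ_Z(t₀) ∈ D(M) (equivalently, M is Z_{t₀}-semistable with μ_{t₀}(M)=t₀), then the expressions 1 − d/dt μ_t(M)|_{t=t₀} and v(t₀)·dim M have the same sign, where v = dγ_Z/dt. In particular, the crossing of the hyperplane H(M) is transverse iff d/dt μ_t(M)|_{t=t₀} ≠ 1, and the crossing is green (v(t₀)·dim M > 0) iff d/dt μ_t(M)|_{t=t₀} < 1. -/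
open scoped BigOperators

noncomputable section

/-- For a nonlinear stability function `Z_t(x) = a_t·x + i b_t·x` with path
`γ_Z(t) = t·b_t − a_t`: if `γ_Z(t₀) ∈ H(M)` (i.e. `μ_{t₀}(β) = t₀` for `β = dim M`), then
`1 − d/dt μ_t(β)|_{t₀}` and `v(t₀)·β` have the same sign, where `v = dγ_Z/dt`. In
particular the crossing is transverse iff the derivative of the slope is `≠ 1`, and green
iff it is `< 1`. -/
theorem stmt15 {n : ℕ} (a b : ℝ → Fin n → ℝ)
    (hbpos : ∀ t i, 0 < b t i)
    (hC1a : ∀ i, ContDiff ℝ 1 (fun t => a t i))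
    (hC1b : ∀ i, ContDiff ℝ 1 (fun t => b t i))
    (β : Fin n → ℕ) (hβ : β ≠ 0) (t₀ : ℝ)
    (h0 : muZ a b t₀ β = t₀) :
    (0 < 1 - deriv (fun t => muZ a b t β) t₀ ↔
      0 < deriv (fun t => dprod (fun i => t * b t i - a t i) β) t₀) ∧
    (1 - deriv (fun t => muZ a b t β) t₀ = 0 ↔
      deriv (fun t => dprod (fun i => t * b t i - a t i) β) t₀ = 0) ∧
    (1 - deriv (fun t => muZ a b t β) t₀ < 0 ↔
      deriv (fun t => dprod (fun i => t * b t i - a t i) β) t₀ < 0) := by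
  classical
  set A : ℝ → ℝ := fun t => dprod (a t) β with hA
  set B : ℝ → ℝ := fun t => dprod (b t) β with hB
  have hAdiff : Differentiable ℝ A := by
    simp only [hA, dprod]
    exact Differentiable.fun_sum fun i _ => ((hC1a i).differentiable one_ne_zero).mul_const _
  have hBdiff : Differentiable ℝ B := by
    simp only [hB, dprod]
    exact Differentiable.fun_sum fun i _ => ((hC1b i).differentiable one_ne_zero).mul_const _
  have hB0 : 0 < B t₀ := by
    obtain ⟨j, hj⟩ : ∃ j, β j ≠ 0 := by
      by_contra h; push_neg at h; exact hβ (funext fun i => h i)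
    refine Finset.sum_pos' (fun i _ => ?_) ⟨j, Finset.mem_univ j, ?_⟩
    · exact mul_nonneg (hbpos t₀ i).le (Nat.cast_nonneg _)
    · exact mul_pos (hbpos t₀ j) (by exact_mod_cast Nat.pos_of_ne_zero hj)
  have hAB : A t₀ = t₀ * B t₀ := by
    have : A t₀ / B t₀ = t₀ := h0
    field_simp at this
    linarith [this]
  set A' : ℝ := deriv A t₀ with hA'
  set B' : ℝ := deriv B t₀ with hB'
  have hmu : deriv (fun t => muZ a b t β) t₀
      = (A' * B t₀ - A t₀ * B') / (B t₀) ^ 2 := by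
    have h := ((hAdiff t₀).hasDerivAt.div (hBdiff t₀).hasDerivAt hB0.ne')
    exact h.deriv
  have hg : (fun t => dprod (fun i => t * b t i - a t i) β)
      = fun t => t * B t - A t := by
    funext t
    simp [dprod, hA, hB, sub_mul, Finset.sum_sub_distrib, Finset.mul_sum, mul_assoc]
  have hgd : deriv (fun t => dprod (fun i => t * b t i - a t i) β) t₀
      = B t₀ + t₀ * B' - A' := by
    rw [hg]
    have h1 : HasDerivAt (fun t => t * B t) (1 * B t₀ + t₀ * B') t₀ :=
      (hasDerivAt_id t₀).mul (hBdiff t₀).hasDerivAt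
    have h2 : HasDerivAt (fun t => t * B t - A t) (1 * B t₀ + t₀ * B' - A') t₀ :=
      h1.sub (hAdiff t₀).hasDerivAt
    rw [h2.deriv]; ring
  have key : 1 - deriv (fun t => muZ a b t β) t₀
      = (B t₀ + t₀ * B' - A') / B t₀ := by
    rw [hmu, hAB]
    field_simp
    ring
  rw [key, hgd]
  refine ⟨⟨fun h => ?_, fun h => div_pos h hB0⟩,
    ⟨fun h => ?_, fun h => by rw [h, zero_div]⟩,
    ⟨fun h => ?_, fun h => div_neg_of_neg_of_pos h hB0⟩⟩
  · have := mul_pos h hB0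
    rwa [div_mul_cancel₀ _ hB0.ne'] at this
  · exact (div_eq_zero_iff.mp h).resolve_right hB0.ne'
  · have := mul_neg_of_neg_of_pos h hB0
    rwa [div_mul_cancel₀ _ hB0.ne'] at this
end
end

section
/- Let M₁, ..., M_m be a maximal forward hom-orthogonal sequence of Schurian Λ-modules (Hom(M_i, M_j)=0 for i<j, each M_i Schurian, and no module can be inserted preserving this). Then for every Λ-module X there is a filtration 0 = X₀ ⊆ X₁ ⊆ ... ⊆ X_m = X with X_k/X_{k−1} ∈ E(M_k) for each k, where E(M) denotes the category of iterated self-extensions of M. -/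
open scoped BigOperators

noncomputable section

namespace Stmt17Aux


section plumb
variable {Λ : Type} [Ring Λ]

lemma isFiltered_of_subsingleton (N Y : Type) [AddCommGroup N] [Module Λ N]
    [AddCommGroup Y] [Module Λ Y] [Subsingleton Y] : IsFiltered Λ N Y := by
  refine ⟨0, fun _ => ⊥, monotone_const, rfl, ?_, fun i => i.elim0⟩
  refine eq_top_iff.2 fun x _ => ?_
  have : x = 0 := Subsingleton.elim x 0
  simp [this]

/-- Transport of subquotients along an injective map. -/
lemma subquot_map_equiv {A B : Type} [AddCommGroup A] [Module Λ A] [AddCommGroup B] [Module Λ B]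
    (ψ : A →ₗ[Λ] B) (hψ : Function.Injective ψ) (p q : Submodule Λ A) (hpq : p ≤ q) :
    Nonempty ((↥(Submodule.map ψ q) ⧸
        Submodule.comap (Submodule.map ψ q).subtype (Submodule.map ψ p)) ≃ₗ[Λ]
      (↥q ⧸ Submodule.comap q.subtype p)) := by
  set e := Submodule.equivMapOfInjective ψ hψ q with he
  have key : ∀ z : ↥q, ((e z : ↥(Submodule.map ψ q)) : B) = ψ z := fun z =>
    Submodule.coe_equivMapOfInjective_apply ψ hψ q z
  have key2 : ∀ y : ↥(Submodule.map ψ q), ψ ((e.symm y : ↥q) : A) = (y : B) := by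
    intro y
    have := key (e.symm y)
    rw [LinearEquiv.apply_symm_apply] at this
    exact this.symm
  refine ⟨(Submodule.Quotient.equiv _ _ e.symm ?_)⟩
  ext y
  simp only [Submodule.mem_map, Submodule.mem_comap, Submodule.subtype_apply]
  constructor
  · rintro ⟨z, hz, rfl⟩
    -- hz : (z : B) ∈ map ψ p; goal : (e.symm z : A) ∈ p
    obtain ⟨a, ha, hay⟩ := hz
    have : ψ ((e.symm z : ↥q) : A) = ψ a := by rw [key2]; exact hay.symm
    have := hψ this
    have h' : ((e.symm z : ↥q) : A) ∈ p := by rw [this]; exact ha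
    exact h'
  · intro hy
    refine ⟨e y, ?_, by simp⟩
    exact ⟨(y : A), hy, (key y).symm⟩




lemma nonempty_subquot_of_eq {Y N : Type} [AddCommGroup N] [Module Λ N] [AddCommGroup Y]
    [Module Λ Y] (p q : Submodule Λ Y) {p' q' : Submodule Λ Y} (hp : p' = p) (hq : q' = q)
    (h : Nonempty ((↥q ⧸ Submodule.comap q.subtype p) ≃ₗ[Λ] N)) :
    Nonempty ((↥q' ⧸ Submodule.comap q'.subtype p') ≃ₗ[Λ] N) := by
  subst hp; subst hq; exact h

lemma IsFiltered.congr {N A B : Type} [AddCommGroup N] [Module Λ N] [AddCommGroup A]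
    [Module Λ A] [AddCommGroup B] [Module Λ B] (e : A ≃ₗ[Λ] B)
    (h : IsFiltered Λ N A) : IsFiltered Λ N B := by
  obtain ⟨k, F, hmono, hbot, htop, hquot⟩ := h
  refine ⟨k, fun i => Submodule.map (e : A →ₗ[Λ] B) (F i),
    fun i j hij => Submodule.map_mono (hmono hij), ?_, ?_, fun i => ?_⟩
  · show Submodule.map (e : A →ₗ[Λ] B) (F 0) = ⊥
    rw [hbot]; exact Submodule.map_bot _
  · show Submodule.map (e : A →ₗ[Λ] B) (F (Fin.last k)) = ⊤
    rw [htop, Submodule.map_top]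
    exact LinearMap.range_eq_top.2 e.surjective
  · exact (subquot_map_equiv (e : A →ₗ[Λ] B) e.injective _ _ (hmono (Fin.castSucc_le_succ i))).elim
      (fun e' => (hquot i).elim fun e'' => ⟨e'.trans e''⟩)

lemma isFiltered_ses {N Y : Type} [AddCommGroup N] [Module Λ N] [AddCommGroup Y] [Module Λ Y]
    (W : Submodule Λ Y) (h1 : IsFiltered Λ N ↥W) (h2 : Nonempty ((Y ⧸ W) ≃ₗ[Λ] N)) :
    IsFiltered Λ N Y := by
  obtain ⟨k, F, hmono, hbot, htop, hquot⟩ := h1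
  refine ⟨k + 1, Fin.snoc (fun i => Submodule.map W.subtype (F i)) ⊤, ?_, ?_, ?_, ?_⟩
  · intro i j hij
    induction j using Fin.lastCases with
    | last => rw [Fin.snoc_last]; exact le_top
    | cast j' =>
      induction i using Fin.lastCases with
      | last =>
        exact absurd (lt_of_le_of_lt hij (Fin.castSucc_lt_last j')) (lt_irrefl _)
      | cast i' =>
        rw [Fin.snoc_castSucc, Fin.snoc_castSucc]
        exact Submodule.map_mono (hmono (by exact_mod_cast hij))
  · have h0 : (0 : Fin (k + 2)) = Fin.castSucc 0 := by simp
    rw [h0, Fin.snoc_castSucc, hbot]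
    exact Submodule.map_bot _
  · rw [Fin.snoc_last]
  · intro i
    induction i using Fin.lastCases with
    | last =>
      refine nonempty_subquot_of_eq W ⊤ ?_ ?_ ?_
      · show (Fin.snoc (fun i => Submodule.map W.subtype (F i)) ⊤ : Fin (k+2) → _)
            ((Fin.last k).castSucc) = W
        rw [Fin.snoc_castSucc, htop, Submodule.map_top, Submodule.range_subtype]
      · show (Fin.snoc (fun i => Submodule.map W.subtype (F i)) ⊤ : Fin (k+2) → _)
            ((Fin.last k).succ) = ⊤
        rw [Fin.succ_last, Fin.snoc_last]
      · obtain ⟨eN⟩ := h2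
        refine ⟨(Submodule.Quotient.equiv _ W
          (Submodule.topEquiv : ↥(⊤ : Submodule Λ Y) ≃ₗ[Λ] Y) ?_).trans eN⟩
        ext x
        simp [Submodule.mem_map, Submodule.mem_comap]
    | cast i' =>
      refine nonempty_subquot_of_eq (Submodule.map W.subtype (F i'.castSucc))
        (Submodule.map W.subtype (F i'.succ)) ?_ ?_ ?_
      · show (Fin.snoc (fun i => Submodule.map W.subtype (F i)) ⊤ : Fin (k+2) → _)
            (i'.castSucc.castSucc) = _
        rw [show i'.castSucc.castSucc = Fin.castSucc i'.castSucc from rfl, Fin.snoc_castSucc]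
      · show (Fin.snoc (fun i => Submodule.map W.subtype (F i)) ⊤ : Fin (k+2) → _)
            (i'.castSucc.succ) = _
        rw [show i'.castSucc.succ = Fin.castSucc i'.succ from Fin.succ_castSucc i', Fin.snoc_castSucc]
      · exact (subquot_map_equiv W.subtype W.injective_subtype _ _
          (hmono (Fin.castSucc_le_succ _))).elim fun e' =>
          (hquot i').elim fun e'' => ⟨e'.trans e''⟩

end plumb

lemma zero_of_comp {Λ : Type} [Ring Λ] {A B C : Type} [AddCommGroup A] [Module Λ A]
    [AddCommGroup B] [Module Λ B] [AddCommGroup C] [Module Λ C] {π : A →ₗ[Λ] B}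
    (hπ : Function.Surjective π) {f : B →ₗ[Λ] C} (h : f.comp π = 0) : f = 0 := by
  ext b
  obtain ⟨a, rfl⟩ := hπ b
  exact DFunLike.congr_fun h a

lemma comp_ne_zero' {Λ : Type} [Ring Λ] {A B C : Type} [AddCommGroup A] [Module Λ A]
    [AddCommGroup B] [Module Λ B] [AddCommGroup C] [Module Λ C] {ψ : B →ₗ[Λ] C}
    (hψ : Function.Injective ψ) {f : A →ₗ[Λ] B} (hf : f ≠ 0) : ψ.comp f ≠ 0 := by
  intro h
  apply hf
  ext a
  have h1 : ψ (f a) = ψ 0 := by simpa using DFunLike.congr_fun h a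
  exact hψ h1

lemma exists_ne_zero' {Λ : Type} [Ring Λ] {A B : Type} [AddCommGroup A] [Module Λ A]
    [AddCommGroup B] [Module Λ B] {f : A →ₗ[Λ] B} (hf : f ≠ 0) : ∃ a, f a ≠ 0 := by
  by_contra h
  push_neg at h
  exact hf (by ext a; simpa using h a)

lemma factor_thru {Λ : Type} [Ring Λ] {A B C : Type} [AddCommGroup A] [Module Λ A]
    [AddCommGroup B] [Module Λ B] [AddCommGroup C] [Module Λ C] (f : A →ₗ[Λ] B)
    (hf : Function.Surjective f) (g : A →ₗ[Λ] C) (hker : LinearMap.ker f ≤ LinearMap.ker g) :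
    ∃ h : B →ₗ[Λ] C, ∀ x, h (f x) = g x := by
  refine ⟨((LinearMap.ker f).liftQ g hker).comp (f.quotKerEquivOfSurjective hf).symm.toLinearMap,
    ?_⟩
  intro x
  have h1 : (f.quotKerEquivOfSurjective hf).symm (f x) = Submodule.Quotient.mk x := by
    rw [LinearEquiv.symm_apply_eq]
    simp [LinearMap.quotKerEquivOfSurjective, LinearMap.quotKerEquivRange]
  simp [h1]

section core
variable {Λ : Type} [Ring Λ] {m : ℕ} {M : Fin m → Type} [∀ i, AddCommGroup (M i)]
  [∀ i, Module Λ (M i)] [∀ i, IsNoetherian Λ (M i)] [∀ i, IsArtinian Λ (M i)]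

/-- Maps from an earlier (or equal) `M i` into a proper submodule of `M j` vanish. -/
lemma into_sub (hSch : ∀ i, Schurian Λ (M i))
    (horth : ∀ i j : Fin m, i < j → ∀ f : M i →ₗ[Λ] M j, f = 0)
    {i j : Fin m} (hij : (i : ℕ) ≤ (j : ℕ)) (B : Submodule Λ (M j)) (hB : B ≠ ⊤)
    (f : M i →ₗ[Λ] ↥B) : f = 0 := by
  by_contra hf
  have hc : B.subtype.comp f ≠ 0 := comp_ne_zero' B.injective_subtype hf
  rcases lt_or_eq_of_le hij with hlt | heq
  · exact hc (horth i j (Fin.lt_def.2 hlt) _)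
  · obtain rfl : i = j := Fin.ext heq
    have hbij := (hSch i).2 _ hc
    apply hB
    rw [eq_top_iff]
    intro x _
    obtain ⟨a, ha⟩ := hbij.2 x
    have : x = (f a : M i) := by rw [← ha]; rfl
    rw [this]
    exact (f a).2

/-- A nonzero map to `M k` from a module with no nonzero maps to later `M j` is surjective. -/
lemma surj_core (hSch : ∀ i, Schurian Λ (M i))
    (horth : ∀ i j : Fin m, i < j → ∀ f : M i →ₗ[Λ] M j, f = 0)
    (hmax : ∀ (N : Type) [AddCommGroup N] [Module Λ N] [IsNoetherian Λ N] [IsArtinian Λ N],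
      (∃ y : N, y ≠ 0) → ∀ k : ℕ, k ≤ m →
        ¬ ((∀ i : Fin m, (i : ℕ) < k → ∀ f : M i →ₗ[Λ] N, f = 0) ∧
           (∀ j : Fin m, k ≤ (j : ℕ) → ∀ g : N →ₗ[Λ] M j, g = 0)))
    (k : Fin m) {Y : Type} [AddCommGroup Y] [Module Λ Y]
    (ha : ∀ j : Fin m, (k : ℕ) < (j : ℕ) → ∀ g : Y →ₗ[Λ] M j, g = 0)
    (g : Y →ₗ[Λ] M k) (hg : g ≠ 0) : Function.Surjective g := by
  rw [← LinearMap.range_eq_top]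
  by_contra hB
  set B := LinearMap.range g with hBdef
  refine hmax ↥B ?_ ((k : ℕ) + 1) (by omega) ⟨?_, ?_⟩
  · obtain ⟨y, hy⟩ := exists_ne_zero' hg
    exact ⟨⟨g y, LinearMap.mem_range_self g y⟩, by simpa using hy⟩
  · intro i hik f
    exact into_sub hSch horth (by omega) B hB f
  · intro j hj ψ
    have h0 : ψ.comp g.rangeRestrict = 0 := ha j (by omega) _
    exact zero_of_comp g.surjective_rangeRestrict h0

lemma ker_hom_zero (hSch : ∀ i, Schurian Λ (M i))
    (horth : ∀ i j : Fin m, i < j → ∀ f : M i →ₗ[Λ] M j, f = 0)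
    (hmax : ∀ (N : Type) [AddCommGroup N] [Module Λ N] [IsNoetherian Λ N] [IsArtinian Λ N],
      (∃ y : N, y ≠ 0) → ∀ k : ℕ, k ≤ m →
        ¬ ((∀ i : Fin m, (i : ℕ) < k → ∀ f : M i →ₗ[Λ] N, f = 0) ∧
           (∀ j : Fin m, k ≤ (j : ℕ) → ∀ g : N →ₗ[Λ] M j, g = 0)))
    (k : Fin m) {Y : Type} [AddCommGroup Y] [Module Λ Y] [IsNoetherian Λ Y] [IsArtinian Λ Y]
    (ha : ∀ j : Fin m, (k : ℕ) < (j : ℕ) → ∀ g' : Y →ₗ[Λ] M j, g' = 0)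
    (g : Y →ₗ[Λ] M k) (hg : Function.Surjective g) :
    ∀ j : Fin m, (k : ℕ) < (j : ℕ) → ∀ h : ↥(LinearMap.ker g) →ₗ[Λ] M j, h = 0 := by
  suffices H : ∀ n : ℕ, ∀ j : Fin m, m - (j : ℕ) ≤ n → (k : ℕ) < (j : ℕ) →
      ∀ h : ↥(LinearMap.ker g) →ₗ[Λ] M j, h = 0 by
    intro j hj h
    exact H m j (by omega) hj h
  intro n
  induction n with
  | zero => intro j hj1 _ _; have := j.isLt; omega
  | succ n IH =>
    intro j hjn hkj h
    by_contra hh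
    by_cases hsurj : Function.Surjective h
    · -- h surjective: build E = Y ⧸ p and contradict maximality at k+1
      set p : Submodule Λ Y := Submodule.map (LinearMap.ker g).subtype (LinearMap.ker h) with hpdef
      have hpW : p ≤ LinearMap.ker g := Submodule.map_subtype_le _ _
      let π : (Y ⧸ p) →ₗ[Λ] M k := Submodule.liftQ p g hpW
      have hπmk : ∀ x : Y, π (Submodule.Quotient.mk x) = g x := fun x => rfl
      have hπs : Function.Surjective π := by
        intro y
        obtain ⟨x, hx⟩ := hg y
        exact ⟨Submodule.Quotient.mk x, by rw [hπmk, hx]⟩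
      have hkerπ : LinearMap.ker π = Submodule.map p.mkQ (LinearMap.ker g) := Submodule.ker_liftQ _ _ _
      set A := Submodule.map p.mkQ (LinearMap.ker g) with hAdef
      let q' : ↥(LinearMap.ker g) →ₗ[Λ] ↥A := p.mkQ.restrict (fun x hx => Submodule.mem_map_of_mem hx)
      have hq'A : ∀ x : ↥(LinearMap.ker g), (q' x : Y ⧸ p) = p.mkQ (x : Y) := fun x => rfl
      have hq's : Function.Surjective q' := by
        rintro ⟨a, x, hx, rfl⟩
        exact ⟨⟨x, hx⟩, rfl⟩
      have hmem : ∀ x : ↥(LinearMap.ker g), ((x : Y) ∈ p ↔ x ∈ LinearMap.ker h) := by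
        intro x
        constructor
        · rintro ⟨y, hy, hyx⟩
          have : y = x := Subtype.ext hyx
          rwa [← this]
        · intro hx
          exact ⟨x, hx, rfl⟩
      have hkerq' : LinearMap.ker q' = LinearMap.ker h := by
        ext x
        rw [LinearMap.mem_ker, ← hmem x]
        constructor
        · intro hx
          have h2 := congrArg Subtype.val hx
          rw [hq'A] at h2
          rw [Submodule.mkQ_apply] at h2
          exact (Submodule.Quotient.mk_eq_zero p).1 h2
        · intro hx
          apply Subtype.ext
          rw [hq'A, Submodule.mkQ_apply]
          exact (Submodule.Quotient.mk_eq_zero p).2 hx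
      obtain ⟨ρ, hρ⟩ := factor_thru q' hq's h (le_of_eq hkerq')
      have hρinj : Function.Injective ρ := by
        rw [← LinearMap.ker_eq_bot]
        rw [eq_bot_iff]
        intro a haa
        obtain ⟨x, rfl⟩ := hq's a
        rw [LinearMap.mem_ker, hρ] at haa
        have : x ∈ LinearMap.ker q' := by rw [hkerq']; exact haa
        rw [Submodule.mem_bot]
        rw [LinearMap.mem_ker] at this
        rw [this]
      -- contradiction with maximality at position k+1 using E = Y ⧸ p
      have hE : ∃ e : Y ⧸ p, e ≠ 0 := by
        obtain ⟨y0, hy0⟩ := (hSch k).1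
        obtain ⟨z, hz⟩ := hπs y0
        exact ⟨z, fun h0 => hy0 (by rw [← hz, h0, map_zero])⟩
      have c2 : ∀ l : Fin m, (k : ℕ) + 1 ≤ (l : ℕ) → ∀ ψ : (Y ⧸ p) →ₗ[Λ] M l, ψ = 0 := by
        intro l hl ψ
        have h0 : ψ.comp p.mkQ = 0 := ha l (by omega) _
        exact zero_of_comp p.mkQ_surjective h0
      refine hmax (Y ⧸ p) hE ((k : ℕ) + 1) (by have := k.isLt; omega) ⟨?_, fun l hl ψ => c2 l hl ψ⟩
      intro i hik f
      by_contra hf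
      by_cases hβ : π.comp f = 0
      · -- f lands in A = ker π, which is isomorphic (via ρ) to a submodule of M j
        have hrange : ∀ x, f x ∈ A := by
          intro x
          rw [← hkerπ]
          exact LinearMap.mem_ker.2 (DFunLike.congr_fun hβ x)
        set f' : M i →ₗ[Λ] ↥A := f.codRestrict A hrange with hf'def
        have hf' : f' ≠ 0 := by
          intro h0
          apply hf
          ext x
          have h1 := DFunLike.congr_fun h0 x
          have : f x = (f' x : Y ⧸ p) := rfl
          rw [this, h1]
          rfl
        have hcomp : ρ.comp f' ≠ 0 := comp_ne_zero' hρinj hf'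
        exact hcomp (horth i j (Fin.lt_def.2 (by omega)) _)
      · -- π ∘ f ≠ 0 forces i = k and a splitting, contradiction
        have hik2 : (i : ℕ) = (k : ℕ) := by
          by_contra hne
          exact hβ (horth i k (Fin.lt_def.2 (by omega)) _)
        obtain rfl : k = i := Fin.ext hik2.symm
        have hbij := (hSch k).2 _ hβ
        set eβ := LinearEquiv.ofBijective _ hbij with heβ
        have heβap : ∀ y, eβ y = π (f y) := fun y => rfl
        set σ : (Y ⧸ p) →ₗ[Λ] (Y ⧸ p) := f ∘ₗ (eβ.symm : M k →ₗ[Λ] M k) ∘ₗ π with hσ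
        set τ := LinearMap.id (R := Λ) (M := Y ⧸ p) - σ with hτ
        have hτA : ∀ x, τ x ∈ A := by
          intro x
          rw [← hkerπ]
          rw [LinearMap.mem_ker]
          have : π (τ x) = π x - π (f (eβ.symm (π x))) := by
            simp [hτ, hσ, map_sub]
          rw [this, ← heβap, LinearEquiv.apply_symm_apply, sub_self]
        set τ' := τ.codRestrict A hτA with hτ'def
        have hτ' : τ' ≠ 0 := by
          intro h0
          obtain ⟨w, hw⟩ := exists_ne_zero' hh
          have haw : ρ (q' w) ≠ 0 := by rw [hρ]; exact hw
          have hq'w : ((q' w : Y ⧸ p)) ∈ A := (q' w).2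
          have hπq'w : π ((q' w : Y ⧸ p)) = 0 := by
            rw [← LinearMap.mem_ker, hkerπ]
            exact hq'w
          have h1 : τ ((q' w : Y ⧸ p)) = 0 := by
            have := DFunLike.congr_fun h0 ((q' w : Y ⧸ p))
            have h2 : τ ((q' w : Y ⧸ p)) = ((τ' ((q' w : Y ⧸ p)) : ↥A) : Y ⧸ p) := rfl
            rw [h2, this]
            rfl
          have h3 : ((q' w : Y ⧸ p)) = f (eβ.symm (π ((q' w : Y ⧸ p)))) := by
            have h1' : ((q' w : Y ⧸ p)) - σ ((q' w : Y ⧸ p)) = 0 := by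
              simpa [hτ, LinearMap.sub_apply] using h1
            have h4 := sub_eq_zero.1 h1'
            simpa [hσ] using h4
          rw [hπq'w, map_zero, map_zero] at h3
          apply haw
          have : q' w = 0 := Subtype.ext (by rw [h3]; rfl)
          rw [this, map_zero]
        have hcomp : ρ.comp τ' ≠ 0 := comp_ne_zero' hρinj hτ'
        exact hcomp (c2 j (by omega) _)
    · -- h not surjective: its image is insertable at j+1
      have hC : LinearMap.range h ≠ ⊤ := fun hC => hsurj (LinearMap.range_eq_top.1 hC)
      refine hmax ↥(LinearMap.range h) ?_ ((j : ℕ) + 1) (by have := j.isLt; omega) ⟨?_, ?_⟩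
      · obtain ⟨y, hy⟩ := exists_ne_zero' hh
        exact ⟨⟨h y, LinearMap.mem_range_self h y⟩, by simpa using hy⟩
      · intro i hij f
        exact into_sub hSch horth (by omega) _ hC f
      · intro l hl ψ
        have h0 : ψ.comp h.rangeRestrict = 0 :=
          IH l (by have := l.isLt; omega) (by omega) _
        exact zero_of_comp h.surjective_rangeRestrict h0

lemma filtered_of (hSch : ∀ i, Schurian Λ (M i))
    (horth : ∀ i j : Fin m, i < j → ∀ f : M i →ₗ[Λ] M j, f = 0)
    (hmax : ∀ (N : Type) [AddCommGroup N] [Module Λ N] [IsNoetherian Λ N] [IsArtinian Λ N],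
      (∃ y : N, y ≠ 0) → ∀ k : ℕ, k ≤ m →
        ¬ ((∀ i : Fin m, (i : ℕ) < k → ∀ f : M i →ₗ[Λ] N, f = 0) ∧
           (∀ j : Fin m, k ≤ (j : ℕ) → ∀ g : N →ₗ[Λ] M j, g = 0)))
    (k : Fin m) (Y : Type) [AddCommGroup Y] [Module Λ Y] [IsNoetherian Λ Y] [IsArtinian Λ Y]
    (ha : ∀ j : Fin m, (k : ℕ) < (j : ℕ) → ∀ g : Y →ₗ[Λ] M j, g = 0)
    (hb : ∀ Z : Submodule Λ Y,
      (∀ j : Fin m, (k : ℕ) ≤ (j : ℕ) → ∀ g : ↥Z →ₗ[Λ] M j, g = 0) → Z = ⊥) :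
    IsFiltered Λ (M k) Y := by
  suffices H : ∀ V : Submodule Λ Y,
      (∀ j : Fin m, (k : ℕ) < (j : ℕ) → ∀ g : ↥V →ₗ[Λ] M j, g = 0) →
      IsFiltered Λ (M k) ↥V by
    have htop := H ⊤ (by
      intro j hj g
      have h0 : g.comp ((Submodule.topEquiv (R := Λ) (M := Y)).symm : Y →ₗ[Λ] _) = 0 :=
        ha j hj _
      exact zero_of_comp (Submodule.topEquiv (R := Λ) (M := Y)).symm.surjective h0)
    exact IsFiltered.congr Submodule.topEquiv htop
  intro V
  induction V using WellFoundedLT.induction with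
  | _ V IH =>
    intro haV
    by_cases hV : V = ⊥
    · subst hV
      haveI : Subsingleton ↥(⊥ : Submodule Λ Y) :=
        ⟨fun a b => Subtype.ext (by rw [Submodule.mem_bot Λ |>.1 a.2, Submodule.mem_bot Λ |>.1 b.2])⟩
      exact isFiltered_of_subsingleton _ _
    · have hne : ¬ (∀ j : Fin m, (k : ℕ) ≤ (j : ℕ) → ∀ g : ↥V →ₗ[Λ] M j, g = 0) :=
        fun hz => hV (hb V hz)
      push_neg at hne
      obtain ⟨j, hkj, g, hgne⟩ := hne
      have hjk : j = k := by
        by_contra hjne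
        have hlt : (k : ℕ) < (j : ℕ) := by
          have : (j : ℕ) ≠ (k : ℕ) := fun he => hjne (Fin.ext he)
          omega
        exact hgne (haV j hlt g)
      subst hjk
      have hsurj := surj_core hSch horth hmax j haV g hgne
      set W' := Submodule.map V.subtype (LinearMap.ker g) with hW'def
      have hW'leV : W' ≤ V := Submodule.map_subtype_le _ _
      have hW'lt : W' < V := by
        refine lt_of_le_of_ne hW'leV (fun he => hgne ?_)
        have h1 : LinearMap.ker g = ⊤ := by
          have h2 := congrArg (Submodule.comap V.subtype) he
          rwa [Submodule.comap_map_eq, Submodule.ker_subtype, sup_bot_eq,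
            Submodule.comap_subtype_self] at h2
        exact LinearMap.ker_eq_top.1 h1
      have haW' : ∀ l : Fin m, (j : ℕ) < (l : ℕ) → ∀ φ : ↥W' →ₗ[Λ] M l, φ = 0 := by
        intro l hl φ
        have e := Submodule.equivMapOfInjective V.subtype V.injective_subtype (LinearMap.ker g)
        have h0 : φ.comp (e : ↥(LinearMap.ker g) →ₗ[Λ] ↥W') = 0 :=
          ker_hom_zero hSch horth hmax j haV g hsurj l hl _
        exact zero_of_comp e.surjective h0
      have hfil := IH W' hW'lt haW'
      have efil : IsFiltered Λ (M j) ↥(LinearMap.ker g) :=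
        IsFiltered.congr
          (Submodule.equivMapOfInjective V.subtype V.injective_subtype (LinearMap.ker g)).symm
          hfil
      exact isFiltered_ses (LinearMap.ker g) efil ⟨g.quotKerEquivOfSurjective hsurj⟩

lemma exists_greatest (X : Type) [AddCommGroup X] [Module Λ X] [IsNoetherian Λ X]
    (k : ℕ) :
    ∃ Wm : Submodule Λ X, (∀ j : Fin m, k ≤ (j : ℕ) → ∀ g : ↥Wm →ₗ[Λ] M j, g = 0) ∧
      ∀ W : Submodule Λ X, (∀ j : Fin m, k ≤ (j : ℕ) → ∀ g : ↥W →ₗ[Λ] M j, g = 0) → W ≤ Wm := by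
  set S : Set (Submodule Λ X) :=
    {W | ∀ j : Fin m, k ≤ (j : ℕ) → ∀ g : ↥W →ₗ[Λ] M j, g = 0} with hS
  have hbot : (⊥ : Submodule Λ X) ∈ S := by
    intro j hj g
    ext x
    have hx : x = 0 := Subtype.ext ((Submodule.mem_bot Λ).1 x.2)
    rw [hx, map_zero]
    rfl
  have hsup : ∀ W₁ ∈ S, ∀ W₂ ∈ S, W₁ ⊔ W₂ ∈ S := by
    intro W₁ h₁ W₂ h₂ j hj g
    have hg₁ : g.comp (Submodule.inclusion (le_sup_left : W₁ ≤ W₁ ⊔ W₂)) = 0 := h₁ j hj _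
    have hg₂ : g.comp (Submodule.inclusion (le_sup_right : W₂ ≤ W₁ ⊔ W₂)) = 0 := h₂ j hj _
    ext x
    obtain ⟨a, ha, b, hb, hab⟩ := Submodule.mem_sup.1 x.2
    have hxab : x = Submodule.inclusion (le_sup_left : W₁ ≤ W₁ ⊔ W₂) ⟨a, ha⟩ +
        Submodule.inclusion (le_sup_right : W₂ ≤ W₁ ⊔ W₂) ⟨b, hb⟩ := by
      apply Subtype.ext
      rw [← hab]
      rfl
    have e1 : g (Submodule.inclusion (le_sup_left : W₁ ≤ W₁ ⊔ W₂) ⟨a, ha⟩) = 0 := by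
      simpa using DFunLike.congr_fun hg₁ ⟨a, ha⟩
    have e2 : g (Submodule.inclusion (le_sup_right : W₂ ≤ W₁ ⊔ W₂) ⟨b, hb⟩) = 0 := by
      simpa using DFunLike.congr_fun hg₂ ⟨b, hb⟩
    rw [hxab, map_add, e1, e2, add_zero]
    rfl
  obtain ⟨Wm, hWmS, hWmmax⟩ := set_has_maximal_iff_noetherian.2 ‹IsNoetherian Λ X› S ⟨⊥, hbot⟩
  refine ⟨Wm, hWmS, ?_⟩
  intro W hW
  have hsup' := hsup W hW Wm hWmS
  have : Wm = W ⊔ Wm := by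
    by_contra hne
    exact hWmmax _ hsup' (lt_of_le_of_ne le_sup_right hne)
  calc W ≤ W ⊔ Wm := le_sup_left
    _ = Wm := this.symm

theorem stmt17' (hSch : ∀ i, Schurian Λ (M i))
    (horth : ∀ i j : Fin m, i < j → ∀ f : M i →ₗ[Λ] M j, f = 0)
    (hmax : ∀ (N : Type) [AddCommGroup N] [Module Λ N] [IsNoetherian Λ N] [IsArtinian Λ N],
      (∃ y : N, y ≠ 0) → ∀ k : ℕ, k ≤ m →
        ¬ ((∀ i : Fin m, (i : ℕ) < k → ∀ f : M i →ₗ[Λ] N, f = 0) ∧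
           (∀ j : Fin m, k ≤ (j : ℕ) → ∀ g : N →ₗ[Λ] M j, g = 0)))
    (X : Type) [AddCommGroup X] [Module Λ X] [IsNoetherian Λ X] [IsArtinian Λ X] :
    ∃ F : Fin (m + 1) → Submodule Λ X, Monotone F ∧ F 0 = ⊥ ∧ F (Fin.last m) = ⊤ ∧
      ∀ i : Fin m, IsFiltered Λ (M i)
        (↥(F i.succ) ⧸ Submodule.comap (F i.succ).subtype (F i.castSucc)) := by
  choose T hT1 hT2 using fun k : ℕ => exists_greatest (Λ := Λ) (M := M) X k
  refine ⟨fun i => T (i : ℕ), ?_, ?_, ?_, ?_⟩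
  · intro i i' hii'
    refine hT2 (i' : ℕ) _ ?_
    intro j hj g
    exact hT1 (i : ℕ) j (le_trans (Fin.le_def.1 hii') hj) g
  · show T 0 = ⊥
    by_contra hne
    obtain ⟨y, hy, hy0⟩ := Submodule.ne_bot_iff _ |>.1 hne
    refine hmax ↥(T 0) ⟨⟨y, hy⟩, fun h0 => hy0 (congrArg Subtype.val h0)⟩ 0 (by omega)
      ⟨fun i hi => absurd hi (by omega), fun j hj g => hT1 0 j (by omega) g⟩
  · show T ((Fin.last m : Fin (m+1)) : ℕ) = ⊤
    rw [Fin.val_last]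
    refine le_antisymm le_top (hT2 m ⊤ ?_)
    intro j hj
    exact absurd hj (by have := j.isLt; omega)
  · intro i
    have hs : ((i.succ : Fin (m + 1)) : ℕ) = (i : ℕ) + 1 := Fin.val_succ i
    have hc : ((i.castSucc : Fin (m + 1)) : ℕ) = (i : ℕ) := Fin.coe_castSucc i
    set q : Submodule Λ ↥(T ((i.succ : Fin (m+1)) : ℕ)) :=
      Submodule.comap (T ((i.succ : Fin (m+1)) : ℕ)).subtype (T ((i.castSucc : Fin (m+1)) : ℕ))
      with hqdef
    refine filtered_of hSch horth hmax i _ ?_ ?_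
    · intro j hj g
      have h0 : g.comp q.mkQ = 0 := hT1 _ j (by omega) _
      exact zero_of_comp q.mkQ_surjective h0
    · intro Z hZ
      set Z' := Submodule.comap q.mkQ Z with hZ'def
      set W := Submodule.map (T ((i.succ : Fin (m+1)) : ℕ)).subtype Z' with hWdef
      -- the inclusion of the lower layer into W
      have hqZ' : q ≤ Z' := fun x hx => by
        have : q.mkQ x = 0 := (Submodule.Quotient.mk_eq_zero q).2 hx
        show q.mkQ x ∈ Z
        rw [this]
        exact Z.zero_mem
      have hcastle : T ((i.castSucc : Fin (m+1)) : ℕ) ≤ T ((i.succ : Fin (m+1)) : ℕ) := by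
        refine hT2 _ _ ?_
        intro j hj g
        exact hT1 _ j (by omega) g
      have hle : T ((i.castSucc : Fin (m+1)) : ℕ) ≤ W := by
        have h1 : Submodule.map (T ((i.succ : Fin (m+1)) : ℕ)).subtype q
            = T ((i.castSucc : Fin (m+1)) : ℕ) := by
          rw [hqdef, Submodule.map_comap_subtype]
          exact inf_eq_right.2 hcastle
        rw [← h1]
        exact Submodule.map_mono hqZ'
      -- W has no nonzero maps to M j for j ≥ i
      have hPW : ∀ j : Fin m, ((i.castSucc : Fin (m+1)) : ℕ) ≤ (j : ℕ) →
          ∀ φ : ↥W →ₗ[Λ] M j, φ = 0 := by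
        intro j hj φ
        have hrmem : ∀ x ∈ Z', (T ((i.succ : Fin (m+1)) : ℕ)).subtype x ∈ W :=
          fun x hx => Submodule.mem_map_of_mem hx
        set r : ↥Z' →ₗ[Λ] ↥W :=
          (T ((i.succ : Fin (m+1)) : ℕ)).subtype.restrict hrmem with hrdef
        have hrs : Function.Surjective r := by
          rintro ⟨w, x, hx, rfl⟩
          exact ⟨⟨x, hx⟩, rfl⟩
        have hθmem : ∀ x : ↥(T ((i.succ : Fin (m+1)) : ℕ)), x ∈ Z' → q.mkQ x ∈ Z :=
          fun x hx => hx
        set θ : ↥Z' →ₗ[Λ] ↥Z := q.mkQ.restrict hθmem with hθdef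
        have hθs : Function.Surjective θ := by
          rintro ⟨z, hz⟩
          obtain ⟨x, hx⟩ := q.mkQ_surjective z
          have hxZ' : x ∈ Z' := by
            show q.mkQ x ∈ Z
            rw [hx]
            exact hz
          exact ⟨⟨x, hxZ'⟩, Subtype.ext hx⟩
        have hker : LinearMap.ker θ ≤ LinearMap.ker (φ.comp r) := by
          intro x hx
          rw [LinearMap.mem_ker] at hx ⊢
          have hx0 : q.mkQ ((x : ↥(T ((i.succ : Fin (m+1)) : ℕ))) : _) = 0 :=
            congrArg Subtype.val hx
          have hxq : ((x : ↥(T ((i.succ : Fin (m+1)) : ℕ)))) ∈ q :=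
            (Submodule.Quotient.mk_eq_zero q).1 hx0
          have hxc : (((x : ↥(T ((i.succ : Fin (m+1)) : ℕ))) : X))
              ∈ T ((i.castSucc : Fin (m+1)) : ℕ) := hxq
          have hcomp0 : φ.comp (Submodule.inclusion hle) = 0 := hT1 _ j hj _
          have : r x = Submodule.inclusion hle ⟨_, hxc⟩ := Subtype.ext rfl
          rw [LinearMap.comp_apply, this]
          exact DFunLike.congr_fun hcomp0 _
        obtain ⟨χ, hχ⟩ := factor_thru θ hθs (φ.comp r) hker
        have hχ0 : χ = 0 := hZ j hj χ
        ext w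
        obtain ⟨x, rfl⟩ := hrs w
        have := hχ x
        rw [hχ0] at this
        have h0 : φ (r x) = 0 := by simpa using this.symm
        rw [h0]
        rfl
      have hWle : W ≤ T ((i.castSucc : Fin (m+1)) : ℕ) := hT2 _ _ hPW
      rw [eq_bot_iff]
      intro z hz
      obtain ⟨x, hx⟩ := q.mkQ_surjective z
      have hxZ' : x ∈ Z' := by
        show q.mkQ x ∈ Z
        rw [hx]
        exact hz
      have hxW : (x : X) ∈ W := Submodule.mem_map_of_mem hxZ'
      have hxq : x ∈ q := hWle hxW
      rw [Submodule.mem_bot, ← hx]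
      exact (Submodule.Quotient.mk_eq_zero q).2 hxq

end core

end Stmt17Aux

/-- If `M₁, ..., M_m` is a maximal forward hom-orthogonal sequence of
Schurian `Λ`-modules (`Hom(M_i, M_j) = 0` for `i < j`, each `M_i` Schurian, and no nonzero
module can be inserted anywhere preserving weak forward hom-orthogonality), then every
`Λ`-module `X` has a filtration `0 = X₀ ⊆ X₁ ⊆ ... ⊆ X_m = X` with
`X_k/X_{k−1} ∈ E(M_k)` for each `k`. -/

theorem stmt17 (Λ : Type) [Ring Λ] (m : ℕ)
    (M : Fin m → Type) [∀ i, AddCommGroup (M i)] [∀ i, Module Λ (M i)]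
    [∀ i, IsNoetherian Λ (M i)] [∀ i, IsArtinian Λ (M i)]
    (hSch : ∀ i, Schurian Λ (M i))
    (horth : ∀ i j : Fin m, i < j → ∀ f : M i →ₗ[Λ] M j, f = 0)
    (hmax : ∀ (N : Type) [AddCommGroup N] [Module Λ N] [IsNoetherian Λ N] [IsArtinian Λ N],
      (∃ y : N, y ≠ 0) → ∀ k : ℕ, k ≤ m →
        ¬ ((∀ i : Fin m, (i : ℕ) < k → ∀ f : M i →ₗ[Λ] N, f = 0) ∧
           (∀ j : Fin m, k ≤ (j : ℕ) → ∀ g : N →ₗ[Λ] M j, g = 0)))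
    (X : Type) [AddCommGroup X] [Module Λ X] [IsNoetherian Λ X] [IsArtinian Λ X] :
    ∃ F : Fin (m + 1) → Submodule Λ X, Monotone F ∧ F 0 = ⊥ ∧ F (Fin.last m) = ⊤ ∧
      ∀ i : Fin m, IsFiltered Λ (M i)
        (↥(F i.succ) ⧸ Submodule.comap (F i.succ).subtype (F i.castSucc)) := by
  exact Stmt17Aux.stmt17' hSch horth hmax X
end
end
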